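/- arXiv:0712.4279 — 9 statements merged into one kernel-verified Lean document; each statement's English description precedes it below -/
import Mathlib

section
/- For any norm Φ on a finite-dimensional real inner product space, any sign vector A (entries in {-1,1}), and any real α ≥ 1, the α-approximation norm satisfies Φ^α(A) ≥ max_Q [(1+α)⟨A,Q⟩ + (1-α)‖Q‖₁] / (2 Φ*(Q)), where the maximum is over nonzero Q. -/
open scoped BigOperators

/-- For any norm `Φ` on `ℝ^X`, any sign vector `A`, and any `α ≥ 1`, the α-approximation
norm `Φ^α(A) = min { Φ B : 1 ≤ A∘B ≤ α }` satisfies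
`Φ^α(A) ≥ ((1+α)⟨A,Q⟩ + (1-α)‖Q‖₁) / (2 Φ*(Q))` for every nonzero `Q`. -/
theorem stmt2 {X : Type*} [Fintype X] (Φ : (X → ℝ) → ℝ)
    (hΦ_add : ∀ f g : X → ℝ, Φ (f + g) ≤ Φ f + Φ g)
    (hΦ_smul : ∀ (c : ℝ) (f : X → ℝ), Φ (c • f) = |c| * Φ f)
    (hΦ_pos : ∀ f : X → ℝ, f ≠ 0 → 0 < Φ f)
    (A : X → ℝ) (hA : ∀ x, A x = 1 ∨ A x = -1)
    (α : ℝ) (hα : 1 ≤ α)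
    (Q : X → ℝ) (hQ : Q ≠ 0) :
    ((1 + α) * (∑ x, A x * Q x) + (1 - α) * (∑ x, |Q x|)) /
        (2 * sSup {t : ℝ | ∃ B : X → ℝ, Φ B ≤ 1 ∧ t = |∑ x, B x * Q x|})
      ≤ sInf {s : ℝ | ∃ B : X → ℝ, (∀ x, 1 ≤ A x * B x ∧ A x * B x ≤ α) ∧ s = Φ B} := by
  classical
  set T := {t : ℝ | ∃ B : X → ℝ, Φ B ≤ 1 ∧ t = |∑ x, B x * Q x|} with hT
  obtain ⟨x₀, hx₀⟩ : ∃ x, Q x ≠ 0 := by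
    by_contra h; push_neg at h; exact hQ (funext h)
  have hΦ0 : Φ 0 = 0 := by
    have := hΦ_smul 0 0
    simpa using this
  have hSetne : {s : ℝ | ∃ B : X → ℝ, (∀ x, 1 ≤ A x * B x ∧ A x * B x ≤ α) ∧ s = Φ B}.Nonempty := by
    refine ⟨Φ A, A, fun x => ?_, rfl⟩
    rcases hA x with h | h <;> simp [h] <;> linarith
  apply le_csInf hSetne
  rintro s ⟨B, hB, rfl⟩
  have hBne : B ≠ 0 := by
    intro h
    have := (hB x₀).1
    rw [h] at this
    simp at this
    linarith
  have hΦB : 0 < Φ B := hΦ_pos B hBne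
  have key : (1 + α) * (∑ x, A x * Q x) + (1 - α) * (∑ x, |Q x|)
      ≤ 2 * ∑ x, B x * Q x := by
    rw [Finset.mul_sum, Finset.mul_sum, Finset.mul_sum, ← Finset.sum_add_distrib]
    apply Finset.sum_le_sum
    intro x _
    have hA2 : A x * A x = 1 := by rcases hA x with h | h <;> simp [h]
    have hQx : |Q x| = |A x * Q x| := by rcases hA x with h | h <;> simp [h]
    have hBx : (A x * B x) * (A x * Q x) = B x * Q x := by
      have h : A x * B x * (A x * Q x) = (A x * A x) * (B x * Q x) := by ring
      rw [h, hA2, one_mul]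
    rw [hQx, ← hBx]
    set t := A x * Q x
    set c := A x * B x
    have h1 : 1 ≤ c := (hB x).1
    have h2 : c ≤ α := (hB x).2
    rcases le_or_gt 0 t with ht | ht
    · rw [abs_of_nonneg ht]; nlinarith
    · rw [abs_of_neg ht]; nlinarith
  by_cases hbdd : BddAbove T
  · have h0T : (0 : ℝ) ∈ T := ⟨0, by simp [hΦ0], by simp⟩
    have hS0 : 0 ≤ sSup T := le_csSup hbdd h0T
    rcases hS0.lt_or_eq with hSpos | hSzero
    · rw [div_le_iff₀ (by positivity)]
      have hmem : |∑ x, ((Φ B)⁻¹ • B) x * Q x| ∈ T := by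
        refine ⟨(Φ B)⁻¹ • B, ?_, rfl⟩
        rw [hΦ_smul, abs_of_nonneg (by positivity)]
        rw [inv_mul_cancel₀ hΦB.ne']
      have hle : |∑ x, ((Φ B)⁻¹ • B) x * Q x| ≤ sSup T := le_csSup hbdd hmem
      have hcalc : |∑ x, ((Φ B)⁻¹ • B) x * Q x| = (Φ B)⁻¹ * |∑ x, B x * Q x| := by
        have h1 : ∑ x, ((Φ B)⁻¹ • B) x * Q x = (Φ B)⁻¹ * ∑ x, B x * Q x := by
          rw [Finset.mul_sum]
          apply Finset.sum_congr rfl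
          intro x _
          simp only [Pi.smul_apply, smul_eq_mul, mul_assoc]
        rw [h1, abs_mul, abs_of_nonneg (by positivity : (0:ℝ) ≤ (Φ B)⁻¹)]
      rw [hcalc] at hle
      have habs : |∑ x, B x * Q x| ≤ Φ B * sSup T := by
        rw [inv_mul_le_iff₀ hΦB] at hle
        linarith [hle]
      have : ∑ x, B x * Q x ≤ Φ B * sSup T :=
        le_trans (le_abs_self _) habs
      nlinarith
    · rw [← hSzero]
      simp [hΦB.le]
  · rw [Real.sSup_of_not_bddAbove hbdd]
    simp [hΦB.le]
end

section
/- If the randomized ε-error k-party NOF communication complexity of a sign tensor A is at most c, then for any α ≥ 1/(1-2ε), log₂ μ^α(A) ≤ c + log₂(1/(1-2ε)). -/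
open scoped BigOperators

variable {ι : Type*} [Fintype ι] [DecidableEq ι] {X : ι → Type*} [∀ i, Fintype (X i)]

/-- A cylinder in dimension `i`: membership does not depend on the `i`-th coordinate. -/
def IsCylinder (i : ι) (Z : Set (∀ j, X j)) : Prop :=
  ∀ z z' : ∀ j, X j, (∀ j, j ≠ i → z j = z' j) → z ∈ Z → z' ∈ Z

/-- A cylinder intersection: an intersection of cylinders, one in each dimension. -/
def IsCylinderIntersection (Z : Set (∀ j, X j)) : Prop :=
  ∃ C : ι → Set (∀ j, X j), (∀ i, IsCylinder i (C i)) ∧ Z = ⋂ i, C i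

/-- The dual cylinder intersection norm `μ*(Q) = max_Z |⟨Q, χ(Z)⟩|`. -/
noncomputable def mustar (Q : (∀ j, X j) → ℝ) : ℝ :=
  sSup {r : ℝ | ∃ Z : Set (∀ j, X j), IsCylinderIntersection Z ∧
    r = |∑ x, Q x * Z.indicator 1 x|}

/-- The cylinder intersection norm `μ(B) = min { Σ|α_i| : B = Σ α_i χ(Z_i) }`. -/
noncomputable def mu (B : (∀ j, X j) → ℝ) : ℝ :=
  sInf {s : ℝ | ∃ (n : ℕ) (α : Fin n → ℝ) (Z : Fin n → Set (∀ j, X j)),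
    (∀ t, IsCylinderIntersection (Z t)) ∧
    (∀ x, B x = ∑ t, α t * (Z t).indicator 1 x) ∧ s = ∑ t, |α t|}

/-- The approximate cylinder intersection norm `μ^∞(A) = min { μ(B) : 1 ≤ A∘B }`. -/
noncomputable def muInf (A : (∀ j, X j) → ℝ) : ℝ :=
  sInf {s : ℝ | ∃ B : (∀ j, X j) → ℝ, (∀ x, 1 ≤ A x * B x) ∧ s = mu B}

/-- `μ^α(A) = min { μ(B) : 1 ≤ A∘B ≤ α }`. -/
noncomputable def muAlpha (A : (∀ j, X j) → ℝ) (α : ℝ) : ℝ :=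
  sInf {s : ℝ | ∃ B : (∀ j, X j) → ℝ, (∀ x, 1 ≤ A x * B x ∧ A x * B x ≤ α) ∧ s = mu B}

/-- If the randomized `ε`-error `k`-party NOF communication complexity of a sign tensor `A`
is at most `c` (i.e., `A` is `2ε`-approximated by a convex combination of sign tensors each
having a monochromatic partition into `2^c` cylinder intersections), then for any
`α ≥ 1/(1-2ε)`, `log₂ μ^α(A) ≤ c + log₂(1/(1-2ε))`. -/
theorem stmt6 {k : ℕ} {X : Fin k → Type*} [∀ i, Fintype (X i)]
    (A : (∀ j, X j) → ℝ) (hA : ∀ x, A x = 1 ∨ A x = -1)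
    (ε : ℝ) (hε0 : 0 ≤ ε) (hε : ε < 1 / 2) (c : ℕ)
    (hR : ∃ (ℓ : ℕ) (p : Fin ℓ → ℝ) (A' : Fin ℓ → ((∀ j, X j) → ℝ)),
      (∀ i, 0 ≤ p i) ∧ (∑ i, p i) = 1 ∧
      (∀ i x, A' i x = 1 ∨ A' i x = -1) ∧
      (∀ i, ∃ Z : Fin (2 ^ c) → Set (∀ j, X j),
        (∀ t, IsCylinderIntersection (Z t)) ∧
        (∀ t t', t ≠ t' → Disjoint (Z t) (Z t')) ∧
        (⋃ t, Z t) = Set.univ ∧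
        (∀ t, ∀ x ∈ Z t, ∀ x' ∈ Z t, A' i x = A' i x')) ∧
      (∀ x, |A x - ∑ i, p i * A' i x| ≤ 2 * ε))
    (α : ℝ) (hα : 1 / (1 - 2 * ε) ≤ α) :
    Real.logb 2 (muAlpha A α) ≤ c + Real.logb 2 (1 / (1 - 2 * ε)) := by
  classical
  obtain ⟨ℓ, p, A', hp0, hp1, hsign, hpart, happrox⟩ := hR
  choose Z hZcyl hZdisj hZcover hZmono using hpart
  set δ : ℝ := 1 - 2 * ε with hδdef
  have hδ : 0 < δ := by simp only [hδdef]; linarith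
  have hδ1 : δ ≤ 1 := by simp only [hδdef]; linarith
  -- value of A' i on cell t
  set val : Fin ℓ → Fin (2 ^ c) → ℝ :=
    fun i t => if h : (Z i t).Nonempty then A' i h.some else 0 with hval
  have hval_abs : ∀ i t, |val i t| ≤ 1 := by
    intro i t
    simp only [hval]
    split
    · rcases hsign i (Set.Nonempty.some ‹_›) with h | h <;> rw [h] <;> norm_num
    · norm_num
  -- decomposition of each A' i
  have hdec : ∀ i x, A' i x = ∑ t, val i t * (Z i t).indicator 1 x := by
    intro i x
    have hx : x ∈ ⋃ t, Z i t := by rw [hZcover i]; trivial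
    obtain ⟨t0, ht0⟩ := Set.mem_iUnion.1 hx
    rw [Finset.sum_eq_single t0]
    · have hne : (Z i t0).Nonempty := ⟨x, ht0⟩
      have : val i t0 = A' i x := by
        simp only [hval, dif_pos hne]
        exact hZmono i t0 _ hne.some_mem x ht0
      rw [this, Set.indicator_of_mem ht0]
      simp
    · intro t _ htne
      have : x ∉ Z i t := fun hmem =>
        (hZdisj i t t0 htne).le_bot ⟨hmem, ht0⟩
      rw [Set.indicator_of_notMem this, mul_zero]
    · intro h; exact absurd (Finset.mem_univ t0) h
  -- the approximating tensor B
  set S : (∀ j, X j) → ℝ := fun x => ∑ i, p i * A' i x with hS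
  set B : (∀ j, X j) → ℝ := fun x => S x / δ with hB
  have hSabs : ∀ x, |S x| ≤ 1 := by
    intro x
    calc |S x| ≤ ∑ i, |p i * A' i x| := Finset.abs_sum_le_sum_abs _ _
      _ ≤ ∑ i, p i := by
          apply Finset.sum_le_sum
          intro i _
          rw [abs_mul, abs_of_nonneg (hp0 i)]
          rcases hsign i x with h | h <;> rw [h] <;> simp
      _ = 1 := hp1
  have hAS : ∀ x, δ ≤ A x * S x ∧ A x * S x ≤ 1 := by
    intro x
    have hax : |A x| = 1 := by rcases hA x with h | h <;> rw [h] <;> norm_num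
    have h1 : A x * S x = A x * A x - A x * (A x - S x) := by ring
    have h2 : A x * A x = 1 := by rcases hA x with h | h <;> rw [h] <;> norm_num
    constructor
    · have : |A x * (A x - S x)| ≤ 2 * ε := by
        rw [abs_mul, hax, one_mul]; exact happrox x
      have := (abs_le.1 this).2
      simp only [hδdef]; rw [h1, h2]; linarith
    · calc A x * S x ≤ |A x * S x| := le_abs_self _
        _ = |S x| := by rw [abs_mul, hax, one_mul]
        _ ≤ 1 := hSabs x
  have hAB : ∀ x, 1 ≤ A x * B x ∧ A x * B x ≤ α := by
    intro x
    have h := hAS x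
    have hq : A x * B x = (A x * S x) / δ := by simp only [hB]; ring
    constructor
    · rw [hq, le_div_iff₀ hδ, one_mul]; exact h.1
    · rw [hq]
      calc A x * S x / δ ≤ 1 / δ :=
            div_le_div_of_nonneg_right h.2 hδ.le
        _ ≤ α := hα
  -- mu B ≤ 2^c / δ
  have hmuB : mu B ≤ 2 ^ c / δ := by
    have hbdd : BddBelow {s : ℝ | ∃ (n : ℕ) (a : Fin n → ℝ)
        (W : Fin n → Set (∀ j, X j)),
        (∀ t, IsCylinderIntersection (W t)) ∧
        (∀ x, B x = ∑ t, a t * (W t).indicator 1 x) ∧ s = ∑ t, |a t|} := by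
      refine ⟨0, fun s hs => ?_⟩
      obtain ⟨n, a, W, -, -, rfl⟩ := hs
      positivity
    set e := (finProdFinEquiv : Fin ℓ × Fin (2 ^ c) ≃ Fin (ℓ * 2 ^ c)) with he
    set coeff : Fin (ℓ * 2 ^ c) → ℝ :=
      fun t => p (e.symm t).1 * val (e.symm t).1 (e.symm t).2 / δ with hcoeff
    set W : Fin (ℓ * 2 ^ c) → Set (∀ j, X j) :=
      fun t => Z (e.symm t).1 (e.symm t).2 with hW
    have hmem : mu B ≤ ∑ t, |coeff t| := by
      apply csInf_le hbdd
      refine ⟨ℓ * 2 ^ c, coeff, W, fun t => hZcyl _ _, fun x => ?_, rfl⟩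
      have : ∑ t, coeff t * (W t).indicator 1 x
          = ∑ q : Fin ℓ × Fin (2 ^ c),
            p q.1 * val q.1 q.2 / δ * (Z q.1 q.2).indicator 1 x := by
        rw [← Equiv.sum_comp e]
        simp [hcoeff, hW]
      rw [this, Fintype.sum_prod_type]
      simp only [hB, hS]
      rw [Finset.sum_div]
      apply Finset.sum_congr rfl
      intro i _
      rw [hdec i x, Finset.mul_sum, Finset.sum_div]
      apply Finset.sum_congr rfl
      intro t _
      ring
    refine hmem.trans ?_
    have : ∑ t, |coeff t| = ∑ q : Fin ℓ × Fin (2 ^ c),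
        |p q.1 * val q.1 q.2 / δ| := by
      rw [← Equiv.sum_comp e]
      simp [hcoeff]
    rw [this, Fintype.sum_prod_type]
    calc ∑ i, ∑ t : Fin (2 ^ c), |p i * val i t / δ|
        ≤ ∑ i, ∑ _t : Fin (2 ^ c), p i / δ := by
          apply Finset.sum_le_sum; intro i _
          apply Finset.sum_le_sum; intro t _
          rw [abs_div, abs_of_pos hδ, abs_mul, abs_of_nonneg (hp0 i)]
          apply div_le_div_of_nonneg_right ?_ hδ.le
          calc p i * |val i t| ≤ p i * 1 := by
                exact mul_le_mul_of_nonneg_left (hval_abs i t) (hp0 i)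
            _ = p i := mul_one _
      _ = 2 ^ c / δ := by
          simp only [Finset.sum_const, Finset.card_univ, Fintype.card_fin,
            nsmul_eq_mul]
          have hcg : ∀ i ∈ Finset.univ, ((2 ^ c : ℕ) : ℝ) * (p i / δ)
              = (2 ^ c : ℝ) / δ * p i := by intros; push_cast; ring
          rw [Finset.sum_congr rfl hcg, ← Finset.mul_sum, hp1, mul_one]
  -- muAlpha A α ≤ mu B
  have hmu_nonneg : ∀ B' : (∀ j, X j) → ℝ, 0 ≤ mu B' := by
    intro B'
    apply Real.sInf_nonneg
    rintro s ⟨n, a, W, -, -, rfl⟩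
    positivity
  have hmuA : muAlpha A α ≤ mu B := by
    apply csInf_le
    · refine ⟨0, fun s hs => ?_⟩
      obtain ⟨B', -, rfl⟩ := hs
      exact hmu_nonneg B'
    · exact ⟨B, hAB, rfl⟩
  have hmain : muAlpha A α ≤ 2 ^ c / δ := hmuA.trans hmuB
  have hmuA_nonneg : 0 ≤ muAlpha A α := by
    apply Real.sInf_nonneg
    rintro s ⟨B', -, rfl⟩
    exact hmu_nonneg B'
  -- conclude with logarithms
  have hδinv : (1 : ℝ) ≤ 1 / δ := by
    rw [le_div_iff₀ hδ, one_mul]; exact hδ1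
  have hrhs : (c : ℝ) + Real.logb 2 (1 / δ) = Real.logb 2 (2 ^ c / δ) := by
    have h2c : (2 : ℝ) ^ c / δ = (2 : ℝ) ^ c * (1 / δ) := by ring
    rw [h2c, Real.logb_mul (by positivity) (by positivity),
      Real.logb_pow, Real.logb_self_eq_one (by norm_num)]
    ring
  rw [hrhs]
  rcases eq_or_lt_of_le hmuA_nonneg with h0 | h0
  · rw [← h0, Real.logb_zero]
    apply Real.logb_nonneg (by norm_num)
    rw [le_div_iff₀ hδ, one_mul]
    calc δ ≤ 1 := hδ1
      _ ≤ 2 ^ c := one_le_pow₀ (by norm_num)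
  · exact Real.logb_le_logb_of_le (by norm_num) h0 hmain
end

section
/- If a sign k-tensor A has nondeterministic NOF complexity at most c (i.e., its −1-entries are covered exactly by 2^c cylinder intersections), then μ^∞(A) ≤ 2·2^c + 1, i.e. N^k(A) ≥ log₂((μ^∞(A)−1)/2). -/
open scoped BigOperators

variable {ι : Type*} [Fintype ι] [DecidableEq ι] {X : ι → Type*} [∀ i, Fintype (X i)]

/-- If a sign `k`-tensor `A` has nondeterministic NOF complexity at most `c`, i.e., its
`−1`-entries are exactly covered by `2^c` cylinder intersections, then
`μ^∞(A) ≤ 2·2^c + 1`, i.e. `N^k(A) ≥ log₂((μ^∞(A)−1)/2)`. -/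
theorem stmt7 {k : ℕ} {X : Fin k → Type*} [∀ i, Fintype (X i)]
    (A : (∀ j, X j) → ℝ) (hA : ∀ x, A x = 1 ∨ A x = -1) (c : ℕ)
    (hN : ∃ Z : Fin (2 ^ c) → Set (∀ j, X j),
      (∀ t, IsCylinderIntersection (Z t)) ∧
      (∀ x, A x = -1 ↔ ∃ t, x ∈ Z t)) :
    muInf A ≤ 2 * 2 ^ c + 1 := by
  obtain ⟨Z, hZcyl, hZcov⟩ := hN
  set B : (∀ j, X j) → ℝ := fun x => 1 - 2 * ∑ t, (Z t).indicator 1 x with hB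
  have hind : ∀ (t : Fin (2^c)) x, (0:ℝ) ≤ (Z t).indicator 1 x := by
    intro t x
    by_cases h : x ∈ Z t <;> simp [Set.indicator, h]
  have hAB : ∀ x, 1 ≤ A x * B x := by
    intro x
    rcases hA x with h1 | h1
    · have hno : ¬ ∃ t, x ∈ Z t := by
        intro h; have := (hZcov x).2 h; rw [h1] at this; norm_num at this
      have : ∀ t, (Z t).indicator (1 : (∀ j, X j) → ℝ) x = 0 := by
        intro t
        have : x ∉ Z t := fun h => hno ⟨t, h⟩
        simp [Set.indicator, this]
      simp [hB, h1, Finset.sum_congr rfl (fun t _ => this t)]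
    · obtain ⟨t, ht⟩ := (hZcov x).1 h1
      have h1le : (1:ℝ) ≤ ∑ t, (Z t).indicator 1 x := by
        have := Finset.single_le_sum (f := fun t => (Z t).indicator (1 : (∀ j, X j) → ℝ) x)
          (fun t _ => hind t x) (Finset.mem_univ t)
        simpa [Set.indicator, ht] using this
      have hBx : B x = 1 - 2 * ∑ t, (Z t).indicator 1 x := rfl
      rw [h1, hBx]; nlinarith
  have hmuB : mu B ≤ 2 * 2 ^ c + 1 := by
    apply csInf_le
    · refine ⟨0, fun s hs => ?_⟩
      obtain ⟨n, α, Z', _, _, rfl⟩ := hs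
      positivity
    · refine ⟨2 ^ c + 1, Fin.cons 1 (fun _ => -2), Fin.cons Set.univ Z, ?_, ?_, ?_⟩
      · intro t
        refine Fin.cases ?_ ?_ t
        · exact ⟨fun _ => Set.univ, fun i z z' _ h => trivial, by simp⟩
        · intro t; exact hZcyl t
      · intro x
        have hBx : B x = 1 - 2 * ∑ t, (Z t).indicator 1 x := rfl
        rw [hBx, Fin.sum_univ_succ]
        simp only [Fin.cons_zero, Fin.cons_succ, Set.indicator_univ, Pi.one_apply, one_mul]
        rw [← Finset.mul_sum]
        ring
      · rw [Fin.sum_univ_succ]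
        simp [Fin.cons_zero, Fin.cons_succ, Finset.sum_const, Finset.card_univ]
        ring
  have : muInf A ≤ mu B := by
    apply csInf_le
    · refine ⟨0, fun s hs => ?_⟩
      obtain ⟨B', _, rfl⟩ := hs
      apply Real.sInf_nonneg
      intro r hr
      obtain ⟨n, α, Z', _, _, rfl⟩ := hr
      positivity
    · exact ⟨B, hAB, rfl⟩
  linarith
end

section
/- For any real k-tensor B on X₁×...×X_k, (μ*(B)/size(B))^{2^{k-1}} ≤ μ*(B ∙₁ B)/size(B ∙₁ B), where B ∙₁ B is the contraction product along the first dimension. -/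
set_option linter.unusedSectionVars false
set_option maxHeartbeats 1000000


open scoped BigOperators

variable {ι : Type*} [Fintype ι] [DecidableEq ι] {X : ι → Type*} [∀ i, Fintype (X i)]

section Basic

lemma isCylinderIntersection_univ :
    IsCylinderIntersection (Set.univ : Set (∀ j, X j)) :=
  ⟨fun _ => Set.univ, fun _ _ _ _ _ => trivial, by simp⟩

lemma mustar_set_finite (Q : (∀ j, X j) → ℝ) :
    {r : ℝ | ∃ Z : Set (∀ j, X j), IsCylinderIntersection Z ∧
      r = |∑ x, Q x * Z.indicator 1 x|}.Finite := by
  apply (Set.finite_range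
    (fun Z : Set (∀ j, X j) => |∑ x, Q x * Z.indicator 1 x|)).subset
  rintro r ⟨Z, _, rfl⟩
  exact ⟨Z, rfl⟩

lemma le_mustar (Q : (∀ j, X j) → ℝ) {Z : Set (∀ j, X j)}
    (hZ : IsCylinderIntersection Z) :
    |∑ x, Q x * Z.indicator 1 x| ≤ mustar Q :=
  le_csSup (mustar_set_finite Q).bddAbove ⟨Z, hZ, rfl⟩

lemma mustar_nonneg (Q : (∀ j, X j) → ℝ) : 0 ≤ mustar Q :=
  le_trans (abs_nonneg _) (le_mustar Q isCylinderIntersection_univ)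

lemma mustar_mem (Q : (∀ j, X j) → ℝ) :
    ∃ Z : Set (∀ j, X j), IsCylinderIntersection Z ∧
      mustar Q = |∑ x, Q x * Z.indicator 1 x| := by
  have h : mustar Q ∈ {r : ℝ | ∃ Z : Set (∀ j, X j), IsCylinderIntersection Z ∧
      r = |∑ x, Q x * Z.indicator 1 x|} :=
    Set.Nonempty.csSup_mem
      ⟨_, ⟨Set.univ, isCylinderIntersection_univ, rfl⟩⟩ (mustar_set_finite Q)
  exact h

lemma indicator_cyl {i : ι} {C : Set (∀ j, X j)} (h : IsCylinder i C)
    {x x' : ∀ j, X j} (hxx : ∀ k, k ≠ i → x k = x' k) :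
    C.indicator (1 : (∀ j, X j) → ℝ) x = C.indicator 1 x' := by
  by_cases hx : x ∈ C
  · rw [Set.indicator_of_mem hx, Set.indicator_of_mem (h x x' hxx hx)]
    simp
  · rw [Set.indicator_of_notMem hx, Set.indicator_of_notMem
      (fun hx' => hx (h x' x (fun k hk => (hxx k hk).symm) hx'))]

end Basic

namespace Stmt8Aux

variable {m : ℕ} {X : Fin (m + 1) → Type*} [∀ i, Fintype (X i)] [∀ i, Nonempty (X i)]

/-- The full point determined by `x₀ = a.1`, the doubled tail `a.2` and selector `ε`. -/
def ptt (a : X 0 × (∀ p : Bool × Fin m, X p.2.succ)) (ε : Fin m → Bool) :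
    ∀ j, X j :=
  Fin.cons a.1 fun i => a.2 (ε i, i)

/-- Selectors which are `false` outside `s`. -/
def Es (s : Finset (Fin m)) : Finset (Fin m → Bool) :=
  Finset.univ.filter fun ε => ∀ i ∉ s, ε i = false

lemma mem_Es {s : Finset (Fin m)} {ε : Fin m → Bool} :
    ε ∈ Es s ↔ ∀ i ∉ s, ε i = false := by
  simp [Es]

lemma ptt_update_noteq {j : Fin m} {b : Bool} {v : X ((b, j) : Bool × Fin m).2.succ}
    {a : X 0 × (∀ p : Bool × Fin m, X p.2.succ)} {ε : Fin m → Bool} (h : ε j ≠ b) :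
    ptt (a.1, Function.update a.2 (b, j) v) ε = ptt a ε := by
  funext k
  refine Fin.cases ?_ (fun i => ?_) k
  · rfl
  · show Function.update a.2 (b, j) v (ε i, i) = a.2 (ε i, i)
    apply Function.update_of_ne
    intro heq
    rw [Prod.mk.injEq] at heq
    exact h (heq.2 ▸ heq.1)

lemma ptt_update_false_agree {j : Fin m} {v : X (Fin.succ j)}
    {a : X 0 × (∀ p : Bool × Fin m, X p.2.succ)} {ε : Fin m → Bool} :
    ∀ k, k ≠ Fin.succ j →
      ptt (a.1, Function.update a.2 (false, j) v) ε k = ptt a ε k := by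
  intro k hk
  refine Fin.cases ?_ (fun i => ?_) k hk
  · intro _; rfl
  · intro hij
    have hij' : i ≠ j := fun h => hij (by rw [h])
    show Function.update a.2 (false, j) v (ε i, i) = a.2 (ε i, i)
    apply Function.update_of_ne
    intro heq
    rw [Prod.mk.injEq] at heq
    exact hij' heq.2

lemma ptt_update_flip {j : Fin m}
    {a : X 0 × (∀ p : Bool × Fin m, X p.2.succ)} {ε : Fin m → Bool} :
    ptt (a.1, Function.update a.2 (false, j) (a.2 (true, j))) ε =
      ptt a (Function.update ε j true) := by
  funext k
  refine Fin.cases ?_ (fun i => ?_) k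
  · rfl
  · show Function.update a.2 (false, j) (a.2 (true, j)) (ε i, i) =
      a.2 (Function.update ε j true i, i)
    by_cases hij : i = j
    · subst hij
      rw [Function.update_self]
      cases hε : ε i
      · rw [Function.update_self]
      · rw [Function.update_of_ne (by simp)]
    · rw [Function.update_of_ne (by simp [hij]),
        Function.update_of_ne hij]


variable (B φ0 : (∀ j, X j) → ℝ) (φ : Fin m → (∀ j, X j) → ℝ)

def gg (s : Finset (Fin m)) (x : ∀ j, X j) : ℝ :=
  B x * (φ0 x * ∏ i ∈ sᶜ, φ i x)

noncomputable def AA (s : Finset (Fin m)) : ℝ :=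
  (∑ a : X 0 × (∀ p : Bool × Fin m, X p.2.succ), ∏ ε ∈ Es s, gg B φ0 φ s (ptt a ε)) /
    (Fintype.card (X 0 × (∀ p : Bool × Fin m, X p.2.succ)) : ℝ)

lemma gg_split {s : Finset (Fin m)} {j : Fin m} (hj : j ∉ s) (x : ∀ j, X j) :
    gg B φ0 φ s x = φ j x * gg B φ0 φ (insert j s) x := by
  unfold gg
  have hcompl : sᶜ = insert j (insert j s)ᶜ := by
    ext k
    by_cases hk : k = j
    · subst hk; simp [hj]
    · simp [hk]
  rw [hcompl, Finset.prod_insert (by simp)]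
  ring

lemma Es_insert {s : Finset (Fin m)} {j : Fin m} (hj : j ∉ s) :
    Es (insert j s) =
      Es s ∪ (Es s).image (fun ε => Function.update ε j true) := by
  ext ε
  simp only [mem_Es, Finset.mem_union, Finset.mem_image]
  constructor
  · intro h
    cases hb : ε j
    · left
      intro i hi
      by_cases hij : i = j
      · subst hij; exact hb
      · exact h i (by simp [hij, hi])
    · right
      refine ⟨Function.update ε j false, ?_, ?_⟩
      · intro i hi
        by_cases hij : i = j
        · subst hij; exact Function.update_self _ _ _
        · rw [Function.update_of_ne hij]
          exact h i (by simp [hij, hi])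
      · funext i
        by_cases hij : i = j
        · subst hij; rw [Function.update_self, hb]
        · rw [Function.update_of_ne hij, Function.update_of_ne hij]
  · rintro (h | ⟨η, hη, rfl⟩) i hi
    · exact h i (fun his => hi (Finset.mem_insert_of_mem his))
    · have hij : i ≠ j := fun h' => hi (h' ▸ Finset.mem_insert_self j s)
      rw [Function.update_of_ne hij]
      exact hη i (fun his => hi (Finset.mem_insert_of_mem his))

lemma Es_j_false {s : Finset (Fin m)} {j : Fin m} (hj : j ∉ s) {ε : Fin m → Bool}
    (hε : ε ∈ Es s) : ε j = false :=
  mem_Es.1 hε j hj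

lemma prod_Es_insert {s : Finset (Fin m)} {j : Fin m} (hj : j ∉ s)
    (h : (Fin m → Bool) → ℝ) :
    ∏ ε ∈ Es (insert j s), h ε =
      (∏ ε ∈ Es s, h ε) * ∏ ε ∈ Es s, h (Function.update ε j true) := by
  rw [Es_insert hj, Finset.prod_union, Finset.prod_image]
  · intro ε₁ h₁ ε₂ h₂ heq
    funext i
    by_cases hij : i = j
    · subst hij; rw [Es_j_false hj h₁, Es_j_false hj h₂]
    · have := congrFun heq i
      dsimp only at this
      rwa [Function.update_of_ne hij, Function.update_of_ne hij] at this
  · rw [Finset.disjoint_left]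
    rintro ε hε₁ hε₂
    rw [Finset.mem_image] at hε₂
    obtain ⟨η, _, rfl⟩ := hε₂
    have := Es_j_false hj hε₁
    rw [Function.update_self] at this
    exact Bool.true_eq_false ▸ (by simp at this)

lemma Es_empty : Es (∅ : Finset (Fin m)) = {fun _ => false} := by
  ext ε
  simp only [mem_Es, Finset.notMem_empty, not_false_iff, forall_true_left,
    Finset.mem_singleton]
  constructor
  · intro h; funext i; exact h i
  · intro h i; rw [h]

lemma Es_univ : Es (Finset.univ : Finset (Fin m)) = Finset.univ := by
  ext ε
  simp [mem_Es]


lemma AA_step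
    (hφa : ∀ i x, 0 ≤ φ i x) (hφb : ∀ i x, φ i x ≤ 1)
    (hcyl : ∀ (i : Fin m) (x x' : ∀ j, X j),
      (∀ k, k ≠ Fin.succ i → x k = x' k) → φ i x = φ i x')
    {s : Finset (Fin m)} {j : Fin m} (hj : j ∉ s) :
    AA B φ0 φ s ^ 2 ≤ AA B φ0 φ (insert j s) := by
  classical
  set Q : (X 0 × (∀ p : Bool × Fin m, X p.2.succ)) → ℝ :=
    fun a => ∏ ε ∈ Es s, gg B φ0 φ (insert j s) (ptt a ε) with hQ
  set P : (X 0 × (∀ p : Bool × Fin m, X p.2.succ)) → ℝ :=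
    fun a => ∏ ε ∈ Es s, φ j (ptt a ε) with hP
  set u : (X 0 × (∀ p : Bool × Fin m, X p.2.succ)) → X (Fin.succ j) →
      (X 0 × (∀ p : Bool × Fin m, X p.2.succ)) :=
    fun a v => (a.1, Function.update a.2 (false, j) v) with hu
  have hQT : ∀ a (v : X (Fin.succ j)),
      Q (a.1, Function.update a.2 (true, j) v) = Q a := by
    intro a v
    refine Finset.prod_congr rfl fun ε hε => ?_
    rw [ptt_update_noteq (by simp [Es_j_false hj hε])]
  have hPF : ∀ a (v : X (Fin.succ j)), P (u a v) = P a := by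
    intro a v
    refine Finset.prod_congr rfl fun ε _ => ?_
    exact hcyl j _ _ ptt_update_false_agree
  have hQflip : ∀ a, Q (u a (a.2 (true, j))) =
      ∏ ε ∈ Es s, gg B φ0 φ (insert j s) (ptt a (Function.update ε j true)) := by
    intro a
    exact Finset.prod_congr rfl fun ε _ => by rw [ptt_update_flip]
  have hnum_s : ∀ a, ∏ ε ∈ Es s, gg B φ0 φ s (ptt a ε) = P a * Q a := by
    intro a
    rw [hP, hQ, ← Finset.prod_mul_distrib]
    exact Finset.prod_congr rfl fun ε _ => gg_split B φ0 φ hj _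
  have hnum_ins : ∀ a, ∏ ε ∈ Es (insert j s), gg B φ0 φ (insert j s) (ptt a ε) =
      Q a * Q (u a (a.2 (true, j))) := by
    intro a
    rw [prod_Es_insert hj, hQflip a]
  set NN : (X 0 × (∀ p : Bool × Fin m, X p.2.succ)) → ℝ :=
    fun a => ∑ v : X (Fin.succ j), Q (u a v) with hNN
  -- the key three-fold update identity
  have key : ∀ (w : ∀ p : Bool × Fin m, X p.2.succ) (v v' : X (Fin.succ j))
      (c : X (Fin.succ j)),
      Function.update (Function.update (Function.update w (false, j) v)
        (true, j) v') (false, j) c =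
      Function.update (Function.update w (false, j) c) (true, j) v' := by
    intro w v v' c
    rw [← Function.update_comm (show ((false, j) : Bool × Fin m) ≠ (true, j) by simp)
      c v' (Function.update w (false, j) v), Function.update_idem]
  -- Step 1
  have e2 : ∑ a, P a * NN a =
      (Fintype.card (X (Fin.succ j)) : ℝ) * ∑ a, P a * Q a := by
    have h1 : ∑ t : (X 0 × (∀ p : Bool × Fin m, X p.2.succ)) × X (Fin.succ j),
        P t.1 * Q (u t.1 t.2) = ∑ a, P a * NN a := by
      refine (Fintype.sum_prod_type _).trans (Finset.sum_congr rfl fun a _ => ?_)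
      show ∑ y, P a * Q (u a y) = P a * NN a
      rw [Finset.mul_sum]
    have h2 : ∑ t : (X 0 × (∀ p : Bool × Fin m, X p.2.succ)) × X (Fin.succ j),
        P t.1 * Q t.1 =
        ∑ t : (X 0 × (∀ p : Bool × Fin m, X p.2.succ)) × X (Fin.succ j),
          P t.1 * Q (u t.1 t.2) := by
      refine Fintype.sum_bijective (fun t => (u t.1 t.2, t.1.2 (false, j)))
        (Function.Involutive.bijective ?_) _ _ fun t => ?_
      · rintro ⟨⟨x₀, w⟩, v⟩
        refine Prod.ext (Prod.ext rfl ?_) ?_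
        · show Function.update (Function.update w (false, j) v) (false, j)
            (w (false, j)) = w
          rw [Function.update_idem, Function.update_eq_self]
        · show Function.update w (false, j) v (false, j) = v
          exact Function.update_self _ _ _
      · obtain ⟨⟨x₀, w⟩, v⟩ := t
        show P (x₀, w) * Q (x₀, w) =
          P (u (x₀, w) v) *
            Q (x₀, Function.update (Function.update w (false, j) v) (false, j)
              (w (false, j)))
        rw [hPF, Function.update_idem, Function.update_eq_self]
    have h3 : ∑ t : (X 0 × (∀ p : Bool × Fin m, X p.2.succ)) × X (Fin.succ j),
        P t.1 * Q t.1 =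
        (Fintype.card (X (Fin.succ j)) : ℝ) * ∑ a, P a * Q a := by
      rw [Fintype.sum_prod_type]
      simp [Finset.sum_const, Finset.card_univ, mul_comm, Finset.mul_sum]
    rw [← h1, ← h2, h3]
  -- Cauchy--Schwarz
  have hPsq : ∑ a, P a ^ 2 ≤
      (Fintype.card (X 0 × (∀ p : Bool × Fin m, X p.2.succ)) : ℝ) := by
    calc ∑ a, P a ^ 2 ≤ ∑ _a : X 0 × (∀ p : Bool × Fin m, X p.2.succ), (1 : ℝ) := by
          refine Finset.sum_le_sum fun a _ => ?_
          have h0 : 0 ≤ P a := Finset.prod_nonneg fun ε _ => hφa j _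
          have h1 : P a ≤ 1 :=
            Finset.prod_le_one (fun ε _ => hφa j _) (fun ε _ => hφb j _)
          nlinarith
      _ = _ := by simp
  have hCS : (∑ a, P a * NN a) ^ 2 ≤
      (Fintype.card (X 0 × (∀ p : Bool × Fin m, X p.2.succ)) : ℝ) *
        ∑ a, NN a ^ 2 := by
    refine le_trans (Finset.sum_mul_sq_le_sq_mul_sq _ P NN) ?_
    exact mul_le_mul_of_nonneg_right hPsq (Finset.sum_nonneg fun a _ => sq_nonneg _)
  -- Step 3
  have e4 : ∑ a, NN a ^ 2 =
      (Fintype.card (X (Fin.succ j)) : ℝ) ^ 2 *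
        ∑ a, Q a * Q (u a (a.2 (true, j))) := by
    have h1 : ∑ t : (X 0 × (∀ p : Bool × Fin m, X p.2.succ)) ×
        X (Fin.succ j) × X (Fin.succ j),
        Q (u t.1 t.2.1) * Q (u t.1 t.2.2) = ∑ a, NN a ^ 2 := by
      rw [Fintype.sum_prod_type]
      refine Finset.sum_congr rfl fun a _ => ?_
      rw [Fintype.sum_prod_type, pow_two, Finset.sum_mul_sum]
    have h2 : ∑ t : (X 0 × (∀ p : Bool × Fin m, X p.2.succ)) ×
        X (Fin.succ j) × X (Fin.succ j),
        Q t.1 * Q (u t.1 (t.1.2 (true, j))) =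
        ∑ t : (X 0 × (∀ p : Bool × Fin m, X p.2.succ)) ×
          X (Fin.succ j) × X (Fin.succ j),
          Q (u t.1 t.2.1) * Q (u t.1 t.2.2) := by
      refine Fintype.sum_bijective (fun t =>
          ((t.1.1, Function.update (Function.update t.1.2 (false, j) t.2.1)
            (true, j) t.2.2), t.1.2 (false, j), t.1.2 (true, j)))
        (Function.Involutive.bijective ?_) _ _ fun t => ?_
      · rintro ⟨⟨x₀, w⟩, v, v'⟩
        refine Prod.ext (Prod.ext rfl ?_) (Prod.ext ?_ ?_)
        · show Function.update (Function.update
            (Function.update (Function.update w (false, j) v) (true, j) v')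
            (false, j) (w (false, j))) (true, j) (w (true, j)) = w
          rw [key, Function.update_idem, Function.update_comm
            (show ((false, j) : Bool × Fin m) ≠ (true, j) by simp),
            Function.update_eq_self, Function.update_eq_self]
        · show Function.update (Function.update w (false, j) v) (true, j) v'
            (false, j) = v
          rw [Function.update_of_ne (by simp), Function.update_self]
        · show Function.update (Function.update w (false, j) v) (true, j) v'
            (true, j) = v'
          exact Function.update_self _ _ _
      · obtain ⟨⟨x₀, w⟩, v, v'⟩ := t
        show Q (x₀, w) * Q (u (x₀, w) (w (true, j))) =
          Q (u ((x₀, Function.update (Function.update w (false, j) v)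
            (true, j) v')) (w (false, j))) *
          Q (u ((x₀, Function.update (Function.update w (false, j) v)
            (true, j) v')) (w (true, j)))
        show Q (x₀, w) * Q (x₀, Function.update w (false, j) (w (true, j))) =
          Q (x₀, Function.update (Function.update
            (Function.update w (false, j) v) (true, j) v') (false, j)
            (w (false, j))) *
          Q (x₀, Function.update (Function.update
            (Function.update w (false, j) v) (true, j) v') (false, j)
            (w (true, j)))
        rw [key, key, Function.update_eq_self]
        rw [hQT (x₀, Function.update w (false, j) (w (true, j))) v',
          hQT (x₀, w) v']
    have h3 : ∑ t : (X 0 × (∀ p : Bool × Fin m, X p.2.succ)) ×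
        X (Fin.succ j) × X (Fin.succ j),
        Q t.1 * Q (u t.1 (t.1.2 (true, j))) =
        (Fintype.card (X (Fin.succ j)) : ℝ) ^ 2 *
          ∑ a, Q a * Q (u a (a.2 (true, j))) := by
      rw [Fintype.sum_prod_type]
      simp only [Finset.sum_const, Finset.card_univ, Fintype.card_prod,
        nsmul_eq_mul]
      rw [Finset.mul_sum]
      refine Finset.sum_congr rfl fun a _ => ?_
      push_cast
      ring
    rw [← h1, ← h2, h3]
  have e5 : ∑ a, Q a * Q (u a (a.2 (true, j))) =
      ∑ a, ∏ ε ∈ Es (insert j s), gg B φ0 φ (insert j s) (ptt a ε) :=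
    Finset.sum_congr rfl fun a _ => (hnum_ins a).symm
  have e1 : ∑ a, ∏ ε ∈ Es s, gg B φ0 φ s (ptt a ε) = ∑ a, P a * Q a :=
    Finset.sum_congr rfl fun a _ => hnum_s a
  have hKpos : (0 : ℝ) <
      (Fintype.card (X 0 × (∀ p : Bool × Fin m, X p.2.succ)) : ℝ) := by
    exact_mod_cast Fintype.card_pos
  have hcVpos : (0 : ℝ) < (Fintype.card (X (Fin.succ j)) : ℝ) := by
    exact_mod_cast Fintype.card_pos
  have hnum : (∑ a, P a * Q a) ^ 2 ≤
      (Fintype.card (X 0 × (∀ p : Bool × Fin m, X p.2.succ)) : ℝ) *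
        ∑ a, ∏ ε ∈ Es (insert j s), gg B φ0 φ (insert j s) (ptt a ε) := by
    have h := hCS
    rw [e2, e4, e5, mul_pow, mul_left_comm] at h
    exact le_of_mul_le_mul_left h (pow_pos hcVpos 2)
  unfold AA
  rw [e1, div_pow]
  calc (∑ a, P a * Q a) ^ 2 /
      ((Fintype.card (X 0 × (∀ p : Bool × Fin m, X p.2.succ)) : ℝ)) ^ 2
      ≤ ((Fintype.card (X 0 × (∀ p : Bool × Fin m, X p.2.succ)) : ℝ) *
          ∑ a, ∏ ε ∈ Es (insert j s), gg B φ0 φ (insert j s) (ptt a ε)) /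
        ((Fintype.card (X 0 × (∀ p : Bool × Fin m, X p.2.succ)) : ℝ)) ^ 2 := by
        exact (div_le_div_iff_of_pos_right (pow_pos hKpos 2)).mpr hnum
    _ = _ := by
        rw [pow_two, mul_div_mul_left _ _ (ne_of_gt hKpos)]


lemma AA_iter
    (hφa : ∀ i x, 0 ≤ φ i x) (hφb : ∀ i x, φ i x ≤ 1)
    (hcyl : ∀ (i : Fin m) (x x' : ∀ j, X j),
      (∀ k, k ≠ Fin.succ i → x k = x' k) → φ i x = φ i x')
    (s : Finset (Fin m)) :
    |AA B φ0 φ ∅| ^ (2 ^ s.card) ≤ |AA B φ0 φ s| := by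
  classical
  induction s using Finset.induction with
  | empty => simp
  | insert _ _ hj _ =>
    rename_i j s ih
    rw [Finset.card_insert_of_notMem hj, pow_succ, pow_mul]
    calc (|AA B φ0 φ ∅| ^ (2 ^ s.card)) ^ 2 ≤ |AA B φ0 φ s| ^ 2 :=
          pow_le_pow_left₀ (pow_nonneg (abs_nonneg _) _) ih 2
      _ = AA B φ0 φ s ^ 2 := sq_abs _
      _ ≤ AA B φ0 φ (insert j s) := AA_step B φ0 φ hφa hφb hcyl hj
      _ ≤ |AA B φ0 φ (insert j s)| := le_abs_self _

/-- The counting equivalence splitting the doubled tail. -/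
def ee : (X 0 × (∀ p : Bool × Fin m, X p.2.succ)) ≃
    ((∀ j, X j) × (∀ i : Fin m, X i.succ)) where
  toFun a := (Fin.cons a.1 fun i => a.2 (false, i), fun i => a.2 (true, i))
  invFun q := (q.1 0, fun p => match p with
    | (false, i) => q.1 i.succ
    | (true, i) => q.2 i)
  left_inv := by
    rintro ⟨x₀, w⟩
    refine Prod.ext (by simp) ?_
    funext p
    rcases p with ⟨b, i⟩
    cases b
    · show (Fin.cons x₀ fun i => w (false, i) : ∀ j, X j) i.succ = w (false, i)
      simp
    · rfl
  right_inv := by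
    rintro ⟨x, y⟩
    refine Prod.ext ?_ rfl
    show (Fin.cons (x 0) fun i => x i.succ : ∀ j, X j) = x
    funext k
    refine Fin.cases ?_ (fun i => ?_) k <;> simp

lemma card_split :
    (Fintype.card (X 0 × (∀ p : Bool × Fin m, X p.2.succ)) : ℝ) =
      (Fintype.card (∀ j, X j) : ℝ) *
        (Fintype.card (∀ i : Fin m, X i.succ) : ℝ) := by
  have h := Fintype.card_congr (ee (X := X))
  rw [← Nat.cast_mul, ← Fintype.card_prod, h]

lemma sum_ptt_false (f : (∀ j, X j) → ℝ) :
    ∑ a : X 0 × (∀ p : Bool × Fin m, X p.2.succ), f (ptt a fun _ => false) =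
      (Fintype.card (∀ i : Fin m, X i.succ) : ℝ) * ∑ x, f x := by
  classical
  have h : ∀ a : X 0 × (∀ p : Bool × Fin m, X p.2.succ),
      f (ptt a fun _ => false) = (fun q : ((∀ j, X j) × (∀ i : Fin m, X i.succ))
        => f q.1) (ee a) := fun a => rfl
  rw [Fintype.sum_congr _ _ h, Equiv.sum_comp (ee (X := X)) (fun q => f q.1),
    Fintype.sum_prod_type]
  simp only [Finset.sum_const, Finset.card_univ, nsmul_eq_mul]
  rw [← Finset.mul_sum]

lemma AA_empty :
    AA B φ0 φ ∅ = (∑ x, B x * (φ0 x * ∏ i, φ i x)) /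
      (Fintype.card (∀ j, X j) : ℝ) := by
  classical
  unfold AA
  rw [Es_empty]
  simp only [Finset.prod_singleton]
  rw [sum_ptt_false (f := gg B φ0 φ ∅), card_split]
  have hL : (Fintype.card (∀ i : Fin m, X i.succ) : ℝ) ≠ 0 := by
    exact_mod_cast Fintype.card_ne_zero
  rw [mul_comm ((Fintype.card (∀ j, X j) : ℝ)) _, mul_div_mul_left _ _ hL]
  congr 1

lemma ptt_agree_fst (x₀ c : X 0) (w : ∀ p : Bool × Fin m, X p.2.succ)
    (ε : Fin m → Bool) :
    ∀ k, k ≠ (0 : Fin (m + 1)) → ptt (x₀, w) ε k = ptt (c, w) ε k := by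
  intro k hk
  refine Fin.cases ?_ (fun i => fun _ => ?_) k hk
  · intro h; exact absurd rfl h
  · show (Fin.cons x₀ (fun i => w (ε i, i)) : ∀ j, X j) i.succ =
      (Fin.cons c (fun i => w (ε i, i)) : ∀ j, X j) i.succ
    rw [Fin.cons_succ, Fin.cons_succ]

lemma AA_univ
    (hc0 : ∀ x x', (∀ k, k ≠ (0 : Fin (m + 1)) → x k = x' k) → φ0 x = φ0 x') :
    AA B φ0 φ Finset.univ =
      (∑ w : ∀ p : Bool × Fin m, X p.2.succ,
        (∑ x₀ : X 0, ∏ ε : Fin m → Bool, B (ptt (x₀, w) ε)) *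
          (∏ ε : Fin m → Bool, φ0 (ptt (Classical.arbitrary (X 0), w) ε))) /
      (Fintype.card (X 0 × (∀ p : Bool × Fin m, X p.2.succ)) : ℝ) := by
  classical
  unfold AA
  rw [Es_univ]
  congr 1
  rw [Fintype.sum_prod_type, Finset.sum_comm]
  refine Finset.sum_congr rfl fun w _ => ?_
  rw [Finset.sum_mul]
  refine Finset.sum_congr rfl fun x₀ _ => ?_
  rw [← Finset.prod_mul_distrib]
  refine Finset.prod_congr rfl fun ε _ => ?_
  unfold gg
  rw [show (Finset.univ : Finset (Fin m))ᶜ = ∅ from Finset.compl_univ,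
    Finset.prod_empty, mul_one]
  congr 1
  exact hc0 _ _ (ptt_agree_fst x₀ _ w ε)

/-- The doubled cylinder determined by the `0`-th cylinder `C0`. -/
def Zp (C0 : Set (∀ j, X j)) : Set (∀ p : Bool × Fin m, X p.2.succ) :=
  {w | ∀ ε : Fin m → Bool, ptt (Classical.arbitrary (X 0), w) ε ∈ C0}

lemma prod_indicator_Zp (C0 : Set (∀ j, X j))
    (w : ∀ p : Bool × Fin m, X p.2.succ) :
    ∏ ε : Fin m → Bool,
        (C0.indicator (1 : (∀ j, X j) → ℝ)) (ptt (Classical.arbitrary (X 0), w) ε) =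
      (Zp C0).indicator 1 w := by
  classical
  by_cases hw : w ∈ Zp C0
  · rw [Set.indicator_of_mem hw]
    calc ∏ ε : Fin m → Bool,
          (C0.indicator (1 : (∀ j, X j) → ℝ)) (ptt (Classical.arbitrary (X 0), w) ε)
        = ∏ _ε : Fin m → Bool, (1 : ℝ) :=
          Finset.prod_congr rfl fun ε _ => by
            rw [Set.indicator_of_mem (hw ε)]; rfl
      _ = 1 := Finset.prod_const_one
  · rw [Set.indicator_of_notMem hw]
    obtain ⟨ε, hε⟩ := not_forall.1 hw
    exact Finset.prod_eq_zero (Finset.mem_univ ε) (Set.indicator_of_notMem hε _)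

lemma Zp_cylint (C0 : Set (∀ j, X j)) (h : IsCylinder 0 C0) :
    IsCylinderIntersection (Zp (X := X) C0) ∨ Zp (X := X) C0 = ∅ := by
  classical
  rcases Nat.eq_zero_or_pos m with hm | hm
  · by_cases h0 : Zp (X := X) C0 = ∅
    · exact Or.inr h0
    · left
      obtain ⟨w₀, hw₀⟩ := Set.nonempty_iff_ne_empty.2 h0
      have hall : Zp (X := X) C0 = Set.univ := by
        ext w
        simp only [Set.mem_univ, iff_true]
        intro ε
        have heq : ptt (Classical.arbitrary (X 0), w) ε =
            ptt (Classical.arbitrary (X 0), w₀) ε := by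
          funext k
          refine Fin.cases rfl (fun i => ?_) k
          exact absurd i.isLt (by omega)
        show ptt (Classical.arbitrary (X 0), w) ε ∈ C0
        rw [heq]
        exact hw₀ ε
      rw [hall]
      exact isCylinderIntersection_univ
  · left
    refine ⟨fun p => {w | ∀ ε : Fin m → Bool, ε p.2 ≠ p.1 →
        ptt (Classical.arbitrary (X 0), w) ε ∈ C0}, ?_, ?_⟩
    · intro p w w' hag hw ε hε
      have heq : ptt (Classical.arbitrary (X 0), w') ε =
          ptt (Classical.arbitrary (X 0), w) ε := by
        funext k
        refine Fin.cases rfl (fun i => ?_) k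
        show w' (ε i, i) = w (ε i, i)
        refine (hag (ε i, i) ?_).symm
        intro hp
        rw [← hp] at hε
        exact hε rfl
      show ptt (Classical.arbitrary (X 0), w') ε ∈ C0
      rw [heq]
      exact hw ε hε
    · ext w
      simp only [Set.mem_iInter, Set.mem_setOf_eq]
      constructor
      · intro hmem p ε hε
        exact hmem ε
      · intro hmem ε
        refine hmem (!(ε ⟨0, hm⟩), ⟨0, hm⟩) ε ?_
        cases ε ⟨0, hm⟩ <;> simp

lemma main_est (B : (∀ j, X j) → ℝ) {Z : Set (∀ j, X j)}
    (hZ : IsCylinderIntersection Z) :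
    (|∑ x, B x * Z.indicator 1 x| / (Fintype.card (∀ j, X j) : ℝ)) ^ (2 ^ m) ≤
      mustar (fun w : ∀ p : Bool × Fin m, X p.2.succ =>
          (∑ x₀ : X 0, ∏ ε : Fin m → Bool, B (Fin.cons x₀ (fun i => w (ε i, i)))) /
            (Fintype.card (X 0) : ℝ)) /
        (Fintype.card (∀ p : Bool × Fin m, X p.2.succ) : ℝ) := by
  classical
  obtain ⟨C, hC, rfl⟩ := hZ
  set φ0 : (∀ j, X j) → ℝ := (C 0).indicator 1 with hφ0
  set φ : Fin m → (∀ j, X j) → ℝ := fun i => (C i.succ).indicator 1 with hφ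
  have hind : ∀ x, (⋂ i, C i).indicator (1 : (∀ j, X j) → ℝ) x =
      φ0 x * ∏ i, φ i x := by
    intro x
    by_cases hx : x ∈ ⋂ i, C i
    · have hx' := Set.mem_iInter.1 hx
      have h1 : ∀ i : Fin m, φ i x = 1 := fun i => by
        rw [hφ]; simp [Set.indicator_of_mem (hx' i.succ)]
      rw [Set.indicator_of_mem hx, hφ0]
      simp [Set.indicator_of_mem (hx' 0), h1]
    · rw [Set.indicator_of_notMem hx]
      rw [Set.mem_iInter] at hx
      push_neg at hx
      obtain ⟨i0, hi0⟩ := hx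
      rcases Fin.eq_zero_or_eq_succ i0 with h0 | ⟨i, rfl⟩
      · rw [h0] at hi0
        rw [hφ0]
        simp [Set.indicator_of_notMem hi0]
      · rw [Finset.prod_eq_zero (Finset.mem_univ i)
          (by rw [hφ]; simp [Set.indicator_of_notMem hi0]), mul_zero]
  have hφa : ∀ i x, 0 ≤ φ i x := fun i x =>
    Set.indicator_nonneg (fun _ _ => zero_le_one) x
  have hφb : ∀ i x, φ i x ≤ 1 := by
    intro i x
    by_cases h : x ∈ C i.succ
    · rw [hφ]; simp [Set.indicator_of_mem h]
    · rw [hφ]; simp [Set.indicator_of_notMem h]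
  have hcyl : ∀ (i : Fin m) (x x' : ∀ j, X j),
      (∀ k, k ≠ Fin.succ i → x k = x' k) → φ i x = φ i x' :=
    fun i x x' hxx => indicator_cyl (hC i.succ) hxx
  have hc0 : ∀ x x', (∀ k, k ≠ (0 : Fin (m + 1)) → x k = x' k) → φ0 x = φ0 x' :=
    fun x x' hxx => indicator_cyl (hC 0) hxx
  have hNpos : (0 : ℝ) < (Fintype.card (∀ j, X j) : ℝ) := by
    exact_mod_cast Fintype.card_pos
  have hN0 : ((Fintype.card (X 0) : ℝ)) ≠ 0 := by
    exact_mod_cast Fintype.card_ne_zero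
  have hMpos : (0 : ℝ) < (Fintype.card (∀ p : Bool × Fin m, X p.2.succ) : ℝ) := by
    exact_mod_cast Fintype.card_pos
  have hA0 : AA B φ0 φ ∅ = (∑ x, B x * (⋂ i, C i).indicator 1 x) /
      (Fintype.card (∀ j, X j) : ℝ) := by
    rw [AA_empty]
    congr 1
    exact Finset.sum_congr rfl fun x _ => by rw [hind x]
  have hiter := AA_iter B φ0 φ hφa hφb hcyl Finset.univ
  rw [Finset.card_univ, Fintype.card_fin] at hiter
  have hAu : AA B φ0 φ Finset.univ =
      (∑ w : ∀ p : Bool × Fin m, X p.2.succ,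
        (fun w : ∀ p : Bool × Fin m, X p.2.succ =>
          (∑ x₀ : X 0, ∏ ε : Fin m → Bool, B (Fin.cons x₀ (fun i => w (ε i, i)))) /
            (Fintype.card (X 0) : ℝ)) w * (Zp (X := X) (C 0)).indicator 1 w) /
      (Fintype.card (∀ p : Bool × Fin m, X p.2.succ) : ℝ) := by
    rw [AA_univ B φ0 φ hc0]
    have hnum : ∀ w : ∀ p : Bool × Fin m, X p.2.succ,
        (∑ x₀ : X 0, ∏ ε : Fin m → Bool, B (ptt (x₀, w) ε)) *
          (∏ ε : Fin m → Bool, φ0 (ptt (Classical.arbitrary (X 0), w) ε)) =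
        (Fintype.card (X 0) : ℝ) *
          ((∑ x₀ : X 0, ∏ ε : Fin m → Bool, B (Fin.cons x₀ (fun i => w (ε i, i)))) /
              (Fintype.card (X 0) : ℝ) * (Zp (X := X) (C 0)).indicator 1 w) := by
      intro w
      rw [hφ0, prod_indicator_Zp]
      rw [← mul_assoc, mul_div_cancel₀ _ hN0]
      rfl
    rw [Finset.sum_congr rfl fun w _ => hnum w, ← Finset.mul_sum,
      Fintype.card_prod, Nat.cast_mul, mul_div_mul_left _ _ hN0]
  have habs0 : |AA B φ0 φ ∅| =
      |∑ x, B x * (⋂ i, C i).indicator 1 x| / (Fintype.card (∀ j, X j) : ℝ) := by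
    rw [hA0, abs_div, abs_of_pos hNpos]
  have habsU : |AA B φ0 φ Finset.univ| ≤
      mustar (fun w : ∀ p : Bool × Fin m, X p.2.succ =>
          (∑ x₀ : X 0, ∏ ε : Fin m → Bool, B (Fin.cons x₀ (fun i => w (ε i, i)))) /
            (Fintype.card (X 0) : ℝ)) /
        (Fintype.card (∀ p : Bool × Fin m, X p.2.succ) : ℝ) := by
    rw [hAu, abs_div, abs_of_pos hMpos]
    rcases Zp_cylint (C 0) (hC 0) with hcyl' | hempty
    · exact div_le_div_of_nonneg_right (le_mustar _ hcyl') hMpos.le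
    · rw [hempty]
      simp only [Set.indicator_empty, Pi.zero_apply, mul_zero,
        Finset.sum_const_zero, abs_zero, zero_div]
      exact div_nonneg (mustar_nonneg _) (le_of_lt hMpos)
  calc (|∑ x, B x * (⋂ i, C i).indicator 1 x| /
        (Fintype.card (∀ j, X j) : ℝ)) ^ (2 ^ m)
      = |AA B φ0 φ ∅| ^ (2 ^ m) := by rw [habs0]
    _ ≤ |AA B φ0 φ Finset.univ| := hiter
    _ ≤ _ := habsU

end Stmt8Aux

/-- For any real `(m+1)`-tensor `B`, `(μ*(B)/size(B))^{2^m} ≤ μ*(B ∙₁ B)/size(B ∙₁ B)`,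
where `B ∙₁ B` is the contraction product along the first dimension: the `2m`-tensor whose
entry at `w` (two copies of each of the last `m` coordinates) is
`E_{x₀}[ ∏_{ε} B(x₀, w(ε₁,1), …, w(ε_m,m)) ]`. -/
theorem stmt8 {m : ℕ} {X : Fin (m + 1) → Type*} [∀ i, Fintype (X i)]
    [∀ i, Nonempty (X i)] (B : (∀ j, X j) → ℝ) :
    (mustar B / (Fintype.card (∀ j, X j) : ℝ)) ^ (2 ^ m) ≤
      mustar (fun w : ∀ p : Bool × Fin m, X p.2.succ =>
          (∑ x₀ : X 0, ∏ ε : Fin m → Bool, B (Fin.cons x₀ (fun i => w (ε i, i)))) /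
            (Fintype.card (X 0) : ℝ)) /
        (Fintype.card (∀ p : Bool × Fin m, X p.2.succ) : ℝ) := by
  obtain ⟨Z, hZ, hmu⟩ := mustar_mem B
  rw [hmu]
  exact Stmt8Aux.main_est B hZ
end

section
/- If H is an N×N Hadamard matrix (sign matrix with pairwise orthogonal rows), then μ*(H) ≤ N^{3/2}, and consequently μ^∞(H) ≥ √N. -/
open scoped BigOperators

/-- The 2-party dual norm: `μ*(Q) = max_R |⟨Q, χ(R)⟩|` over combinatorial rectangles. -/
noncomputable def mustarM {N : ℕ} (Q : Fin N → Fin N → ℝ) : ℝ :=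
  sSup {r : ℝ | ∃ S T : Finset (Fin N), r = |∑ i ∈ S, ∑ j ∈ T, Q i j|}

/-- The 2-party cylinder intersection norm: decompositions into combinatorial rectangles. -/
noncomputable def muM {N : ℕ} (B : Fin N → Fin N → ℝ) : ℝ :=
  sInf {s : ℝ | ∃ (n : ℕ) (α : Fin n → ℝ) (S T : Fin n → Finset (Fin N)),
    (∀ i j, B i j = ∑ t, α t * (if i ∈ S t ∧ j ∈ T t then 1 else 0)) ∧
    s = ∑ t, |α t|}

/-- `μ^∞(A) = min { μ(B) : 1 ≤ A∘B }` for sign matrices. -/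
noncomputable def muInfM {N : ℕ} (A : Fin N → Fin N → ℝ) : ℝ :=
  sInf {s : ℝ | ∃ B : Fin N → Fin N → ℝ, (∀ i j, 1 ≤ A i j * B i j) ∧ s = muM B}

lemma aux_pow_eq (N : ℕ) : Real.sqrt ((N:ℝ)^3) = (N : ℝ) ^ ((3 : ℝ) / 2) := by
  rw [Real.sqrt_eq_rpow, ← Real.rpow_natCast (N:ℝ) 3, ← Real.rpow_mul (by positivity)]
  norm_num

lemma rect_bound (N : ℕ) (H : Fin N → Fin N → ℝ)
    (hsign : ∀ i j, H i j = 1 ∨ H i j = -1)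
    (horth : ∀ i i', i ≠ i' → ∑ j, H i j * H i' j = 0)
    (S T : Finset (Fin N)) :
    |∑ i ∈ S, ∑ j ∈ T, H i j| ≤ (N : ℝ) ^ ((3 : ℝ) / 2) := by
  set f : Fin N → ℝ := fun j => ∑ i ∈ S, H i j with hf
  have hswap : ∑ i ∈ S, ∑ j ∈ T, H i j = ∑ j ∈ T, f j := Finset.sum_comm
  have h1 : (∑ j ∈ T, f j)^2 ≤ (T.card : ℝ) * ∑ j ∈ T, f j ^ 2 :=
    sq_sum_le_card_mul_sum_sq
  have h2 : ∑ j ∈ T, f j ^ 2 ≤ ∑ j, f j ^ 2 :=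
    Finset.sum_le_sum_of_subset_of_nonneg (Finset.subset_univ T)
      (fun _ _ _ => sq_nonneg _)
  have h3 : ∑ j, f j ^ 2 = (S.card : ℝ) * N := by
    have hdiag : ∀ i ∈ S, ∑ i' ∈ S, ∑ j, H i j * H i' j = (N : ℝ) := by
      intro i hi
      rw [Finset.sum_eq_single_of_mem i hi (fun i' _ h => horth i i' (Ne.symm h))]
      have : ∀ j, H i j * H i j = 1 := by
        intro j; rcases hsign i j with h | h <;> rw [h] <;> norm_num
      simp [this]
    calc ∑ j, f j ^ 2 = ∑ j, ∑ i ∈ S, ∑ i' ∈ S, H i j * H i' j :=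
          Finset.sum_congr rfl fun j _ => by rw [hf, sq, Finset.sum_mul_sum]
      _ = ∑ i ∈ S, ∑ i' ∈ S, ∑ j, H i j * H i' j := by
          rw [Finset.sum_comm]
          exact Finset.sum_congr rfl fun i _ => Finset.sum_comm
      _ = ∑ i ∈ S, (N:ℝ) := Finset.sum_congr rfl hdiag
      _ = (S.card : ℝ) * N := by rw [Finset.sum_const, nsmul_eq_mul]
  have hsq : (∑ j ∈ T, f j)^2 ≤ (N:ℝ)^3 := by
    calc (∑ j ∈ T, f j)^2 ≤ (T.card : ℝ) * ((S.card : ℝ) * N) := by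
          refine h1.trans ?_
          exact mul_le_mul_of_nonneg_left (h2.trans_eq h3) (by positivity)
      _ ≤ (N:ℝ) * ((N:ℝ) * N) := by
          have hT : (T.card : ℝ) ≤ N := by
            exact_mod_cast (Finset.card_le_card (Finset.subset_univ T)).trans
              (le_of_eq (Finset.card_univ.trans (Fintype.card_fin N)))
          have hS : (S.card : ℝ) ≤ N := by
            exact_mod_cast (Finset.card_le_card (Finset.subset_univ S)).trans
              (le_of_eq (Finset.card_univ.trans (Fintype.card_fin N)))
          have hN0 : (0:ℝ) ≤ N := Nat.cast_nonneg N
          exact mul_le_mul hT (mul_le_mul_of_nonneg_right hS hN0)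
            (by positivity) hN0
      _ = (N:ℝ)^3 := by ring
  rw [hswap, ← aux_pow_eq, ← Real.sqrt_sq_eq_abs]
  exact Real.sqrt_le_sqrt hsq

lemma rect_sum (N : ℕ) (f : Fin N → Fin N → ℝ) (S T : Finset (Fin N)) :
    ∑ i, ∑ j, f i j * (if i ∈ S ∧ j ∈ T then 1 else 0) = ∑ i ∈ S, ∑ j ∈ T, f i j := by
  simp_rw [mul_ite, mul_one, mul_zero, ite_and]
  have h : ∀ i, (∑ j, if i ∈ S then if j ∈ T then f i j else 0 else 0)
      = if i ∈ S then ∑ j ∈ T, f i j else 0 := by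
    intro i; split_ifs with h
    · rw [Finset.sum_ite_mem, Finset.univ_inter]
    · simp
  simp_rw [h]
  rw [Finset.sum_ite_mem, Finset.univ_inter]

/-- If `H` is an `N×N` Hadamard matrix (sign matrix with pairwise orthogonal rows), then
`μ*(H) ≤ N^{3/2}` and consequently `μ^∞(H) ≥ √N`. -/
theorem stmt10 (N : ℕ) (hN : 0 < N) (H : Fin N → Fin N → ℝ)
    (hsign : ∀ i j, H i j = 1 ∨ H i j = -1)
    (horth : ∀ i i', i ≠ i' → ∑ j, H i j * H i' j = 0) :
    mustarM H ≤ (N : ℝ) ^ ((3 : ℝ) / 2) ∧ Real.sqrt N ≤ muInfM H := by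
  have hrect := rect_bound N H hsign horth
  constructor
  · refine Real.sSup_le ?_ (by positivity)
    rintro r ⟨S, T, rfl⟩
    exact hrect S T
  · -- every feasible B has muM B ≥ √N
    have key : ∀ B : Fin N → Fin N → ℝ, (∀ i j, 1 ≤ H i j * B i j) →
        Real.sqrt N ≤ muM B := by
      intro B hB
      refine le_csInf ?_ ?_
      · -- decomposition exists: entrywise
        refine ⟨∑ t : Fin N × Fin N, |B t.1 t.2|, ?_⟩
        classical
        refine ⟨N * N, fun t => B (finProdFinEquiv.symm t).1 (finProdFinEquiv.symm t).2,
          fun t => {(finProdFinEquiv.symm t).1}, fun t => {(finProdFinEquiv.symm t).2}, ?_, ?_⟩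
        · intro i j
          have key : ∀ (F : Fin (N*N) → ℝ),
              ∑ t, F t = ∑ p : Fin N × Fin N, F (finProdFinEquiv p) :=
            fun F => (Equiv.sum_comp finProdFinEquiv F).symm
          rw [key]
          simp only [Equiv.symm_apply_apply]
          rw [Finset.sum_eq_single_of_mem (i, j) (Finset.mem_univ _)]
          · simp
          · rintro ⟨a, b⟩ _ hab
            simp only [Finset.mem_singleton]
            rw [mul_ite, mul_one, mul_zero, if_neg]
            rintro ⟨rfl, rfl⟩; exact hab rfl
        · have key : ∀ (F : Fin (N*N) → ℝ),
              ∑ t, F t = ∑ p : Fin N × Fin N, F (finProdFinEquiv p) :=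
            fun F => (Equiv.sum_comp finProdFinEquiv F).symm
          rw [key]
          simp
      · rintro s ⟨n, α, S, T, hdec, rfl⟩
        have hinner : (N:ℝ)^2 ≤ ∑ i, ∑ j, H i j * B i j := by
          calc (N:ℝ)^2 = ∑ i : Fin N, ∑ j : Fin N, (1:ℝ) := by
                simp [sq]
            _ ≤ _ := Finset.sum_le_sum fun i _ =>
                Finset.sum_le_sum fun j _ => hB i j
        have heq : ∑ i, ∑ j, H i j * B i j
            = ∑ t, α t * (∑ i ∈ S t, ∑ j ∈ T t, H i j) := by
          refine Eq.symm ?_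
          calc ∑ t, α t * (∑ i ∈ S t, ∑ j ∈ T t, H i j)
              = ∑ t, ∑ i, ∑ j,
                  H i j * (α t * (if i ∈ S t ∧ j ∈ T t then 1 else 0)) := by
                refine Finset.sum_congr rfl fun t _ => ?_
                rw [← rect_sum N H (S t) (T t), Finset.mul_sum]
                refine Finset.sum_congr rfl fun i _ => ?_
                rw [Finset.mul_sum]
                exact Finset.sum_congr rfl fun j _ => by ring
            _ = ∑ i, ∑ t, ∑ j,
                  H i j * (α t * (if i ∈ S t ∧ j ∈ T t then 1 else 0)) :=
                Finset.sum_comm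
            _ = ∑ i, ∑ j, ∑ t,
                  H i j * (α t * (if i ∈ S t ∧ j ∈ T t then 1 else 0)) :=
                Finset.sum_congr rfl fun i _ => Finset.sum_comm
            _ = ∑ i, ∑ j, H i j * B i j := by
                refine Finset.sum_congr rfl fun i _ =>
                  Finset.sum_congr rfl fun j _ => ?_
                rw [hdec i j, Finset.mul_sum]
        have hub : ∑ i, ∑ j, H i j * B i j ≤ (∑ t, |α t|) * (N:ℝ)^((3:ℝ)/2) := by
          rw [heq, Finset.sum_mul]
          calc ∑ t, α t * (∑ i ∈ S t, ∑ j ∈ T t, H i j)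
              ≤ ∑ t, |α t * (∑ i ∈ S t, ∑ j ∈ T t, H i j)| :=
                Finset.sum_le_sum fun t _ => le_abs_self _
            _ ≤ ∑ t, |α t| * (N:ℝ)^((3:ℝ)/2) := by
                refine Finset.sum_le_sum fun t _ => ?_
                rw [abs_mul]
                exact mul_le_mul_of_nonneg_left (hrect (S t) (T t)) (abs_nonneg _)
        have hpos : (0:ℝ) < (N:ℝ)^((3:ℝ)/2) := by
          apply Real.rpow_pos_of_pos; exact_mod_cast hN
        have h1 : (N:ℝ)^2 ≤ (∑ t, |α t|) * (N:ℝ)^((3:ℝ)/2) := hinner.trans hub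
        have h2 : Real.sqrt N * (N:ℝ)^((3:ℝ)/2) = (N:ℝ)^2 := by
          rw [Real.sqrt_eq_rpow, ← Real.rpow_add (by exact_mod_cast hN),
            ← Real.rpow_natCast (N:ℝ) 2]
          norm_num
        rw [← h2] at h1
        exact le_of_mul_le_mul_right h1 hpos
    refine le_csInf ⟨muM H, H, fun i j => ?_, rfl⟩ ?_
    · rcases hsign i j with h | h <;> rw [h] <;> norm_num
    · rintro s ⟨B, hB, rfl⟩
      exact key B hB
end

section
/- Let H be a Hadamard k-tensor of side length N, i.e., a sign k-tensor such that (H ∙₁ H)(x₂,x₂',...,x_k,x_k') = 0 whenever x_i ≠ x_i' for all i = 2,...,k. Then μ^∞(H) ≥ (N/(k−1))^{1/2^{k−1}}. -/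
open scoped BigOperators

variable {ι : Type*} [Fintype ι] [DecidableEq ι] {X : ι → Type*} [∀ i, Fintype (X i)]

-- helper: indicator of cylinder doesn't depend on coordinate i
lemma indicator_cyl_eq {i : ι} {s : Set (∀ j, X j)} (hs : IsCylinder i s)
    {w w' : ∀ j, X j} (h : ∀ j, j ≠ i → w j = w' j) :
    s.indicator (1 : (∀ j, X j) → ℝ) w = s.indicator (1 : (∀ j, X j) → ℝ) w' := by
  classical
  by_cases hw : w ∈ s
  · rw [Set.indicator_of_mem hw, Set.indicator_of_mem (hs w w' h hw)]; rfl
  · have hw' : w' ∉ s := fun hmem => hw (hs w' w (fun j hj => (h j hj).symm) hmem)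
    rw [Set.indicator_of_notMem hw, Set.indicator_of_notMem hw']

lemma indicator_iInter_eq_prod (C : ι → Set (∀ j, X j)) (x : ∀ j, X j) :
    Set.indicator (⋂ i, C i) (1 : (∀ j, X j) → ℝ) x = ∏ i, (C i).indicator (1 : (∀ j, X j) → ℝ) x := by
  classical
  by_cases h : ∀ i, x ∈ C i
  · rw [Set.indicator_of_mem (Set.mem_iInter.2 h)]
    rw [Finset.prod_congr rfl fun i _ => Set.indicator_of_mem (h i) (1 : (∀ j, X j) → ℝ)]
    simp
  · push_neg at h
    obtain ⟨i, hi⟩ := h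
    rw [Set.indicator_of_notMem (fun hx => hi (Set.mem_iInter.1 hx i)),
      Finset.prod_eq_zero (Finset.mem_univ i) (Set.indicator_of_notMem hi _)]

lemma singleton_isCylInt {m N : ℕ} (hm : 1 ≤ m) (z : Fin (m + 1) → Fin N) :
    IsCylinderIntersection {z} := by
  refine ⟨fun i => {w | ∀ j, j ≠ i → w j = z j}, fun i w w' h hw => fun j hj => ?_, ?_⟩
  · rw [← h j hj]; exact hw j hj
  · ext w
    simp only [Set.mem_singleton_iff, Set.mem_iInter, Set.mem_setOf_eq]
    constructor
    · rintro rfl i j _; rfl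
    · intro h
      funext j
      set a : Fin (m + 1) := ⟨0, by omega⟩
      set b : Fin (m + 1) := ⟨1, by omega⟩
      have hab : a ≠ b := by simp [a, b, Fin.ext_iff]
      by_cases hj : j = a
      · subst hj; exact h b a fun hc => hab hc
      · exact h a j hj

lemma key_ineq (N : ℕ) (hN : 0 < N) :
    ∀ (m : ℕ) (F : Fin N → (Fin m → Fin N) → ℝ)
      (f : Fin m → Fin N → (Fin m → Fin N) → ℝ) (g : (Fin m → Fin N) → ℝ),
      (∀ i x₀ y, 0 ≤ f i x₀ y) → (∀ i x₀ y, f i x₀ y ≤ 1) →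
      (∀ i x₀ y c, f i x₀ (Function.update y i c) = f i x₀ y) →
      (∀ y, |g y| ≤ 1) →
      |∑ x₀, ∑ y, (∏ i, f i x₀ y) * g y * F x₀ y| ^ 2 ^ m * (N : ℝ) ^ (2 * m + 1) ≤
        (N : ℝ) ^ ((m + 1) * 2 ^ m) *
          ∑ y : Fin m → Fin N, ∑ y' : Fin m → Fin N,
            |∑ x₀, ∏ ε : Fin m → Bool, F x₀ fun i => if ε i then y' i else y i| := by
  intro m
  induction m with
  | zero =>
    intro F f g hf0 hf1 hind hg
    have e1 : ∀ (h : (Fin 0 → Fin N) → ℝ), ∑ y, h y = h default := fun h =>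
      Fintype.sum_unique h
    have e2 : ∀ (h : (Fin 0 → Bool) → ℝ), ∏ ε, h ε = h default := fun h => by
      rw [Fintype.prod_unique h]; exact congrArg h (Subsingleton.elim _ _)
    have e3 : ∀ (y y' : Fin 0 → Fin N),
        (fun i => if (default : Fin 0 → Bool) i then y' i else y i) = default :=
      fun _ _ => Subsingleton.elim _ _
    simp only [e1, e2, e3, Finset.univ_eq_empty, Finset.prod_empty, one_mul, pow_zero,
      pow_one, ← Finset.mul_sum, abs_mul]
    have h1 : |g default| * |∑ x₀, F x₀ default| ≤ |∑ x₀, F x₀ default| := by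
      nlinarith [abs_nonneg (∑ x₀, F x₀ default), hg default, abs_nonneg (g default)]
    have hNpos : (0:ℝ) ≤ (N:ℝ) ^ (2 * 0 + 1) := by positivity
    calc |g default| * |∑ x₀, F x₀ default| * (N:ℝ) ^ (2 * 0 + 1)
        ≤ |∑ x₀, F x₀ default| * (N:ℝ) ^ (2 * 0 + 1) := by
          apply mul_le_mul_of_nonneg_right h1 hNpos
      _ = (N:ℝ) ^ ((0 + 1) * 2 ^ 0) * |∑ x₀, F x₀ default| := by ring_nf
  | succ m ih =>
    intro F f g hf0 hf1 hind hg
    classical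
    set z0 : Fin N := ⟨0, hN⟩ with hz0
    set A : Fin N → (Fin m → Fin N) → ℝ := fun x₀ z => f 0 x₀ (Fin.cons z0 z) with hA
    set B : Fin N → (Fin m → Fin N) → ℝ := fun x₀ z =>
      ∑ t, (∏ i : Fin m, f i.succ x₀ (Fin.cons t z)) * g (Fin.cons t z) * F x₀ (Fin.cons t z)
      with hB
    have hf0cons : ∀ x₀ t z, f 0 x₀ (Fin.cons t z) = A x₀ z := by
      intro x₀ t z
      have h := hind 0 x₀ (Fin.cons t z) z0
      rw [Fin.update_cons_zero] at h
      exact h.symm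
    -- Step 1: rewrite S
    have hS : (∑ x₀, ∑ y, (∏ i, f i x₀ y) * g y * F x₀ y)
        = ∑ x₀, ∑ z : Fin m → Fin N, A x₀ z * B x₀ z := by
      refine Finset.sum_congr rfl fun x₀ _ => ?_
      calc ∑ y, (∏ i, f i x₀ y) * g y * F x₀ y
          = ∑ p : Fin N × (Fin m → Fin N),
              (∏ i, f i x₀ (Fin.cons p.1 p.2)) * g (Fin.cons p.1 p.2) *
                F x₀ (Fin.cons p.1 p.2) := by
            rw [← Equiv.sum_comp (Fin.consEquiv fun _ => Fin N)
              (fun y => (∏ i, f i x₀ y) * g y * F x₀ y)]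
            rfl
        _ = ∑ t, ∑ z, (∏ i, f i x₀ (Fin.cons t z)) * g (Fin.cons t z) * F x₀ (Fin.cons t z) :=
            Fintype.sum_prod_type _
        _ = ∑ z, ∑ t, (∏ i, f i x₀ (Fin.cons t z)) * g (Fin.cons t z) * F x₀ (Fin.cons t z) :=
            Finset.sum_comm
        _ = ∑ z, A x₀ z * B x₀ z := by
            refine Finset.sum_congr rfl fun z _ => ?_
            rw [hB, Finset.mul_sum]
            refine Finset.sum_congr rfl fun t _ => ?_
            rw [Fin.prod_univ_succ, hf0cons]
            ring
    -- Step 2: Cauchy-Schwarz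
    have hcard : ∑ _p : Fin N × (Fin m → Fin N), (1:ℝ) = (N:ℝ) ^ (m + 1) := by
      rw [Finset.sum_const, Finset.card_univ]
      simp [Fintype.card_fun, pow_succ]
      ring
    have hCS : (∑ x₀, ∑ z : Fin m → Fin N, A x₀ z * B x₀ z) ^ 2
        ≤ (N:ℝ) ^ (m + 1) * ∑ x₀, ∑ z : Fin m → Fin N, B x₀ z ^ 2 := by
      rw [← Fintype.sum_prod_type (fun p : Fin N × (Fin m → Fin N) => A p.1 p.2 * B p.1 p.2),
        ← Fintype.sum_prod_type (fun p : Fin N × (Fin m → Fin N) => B p.1 p.2 ^ 2)]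
      calc (∑ p : Fin N × (Fin m → Fin N), A p.1 p.2 * B p.1 p.2) ^ 2
          ≤ (∑ p : Fin N × (Fin m → Fin N), A p.1 p.2 ^ 2) *
              ∑ p : Fin N × (Fin m → Fin N), B p.1 p.2 ^ 2 :=
            Finset.sum_mul_sq_le_sq_mul_sq _ _ _
        _ ≤ (N:ℝ) ^ (m + 1) * ∑ p : Fin N × (Fin m → Fin N), B p.1 p.2 ^ 2 := by
            apply mul_le_mul_of_nonneg_right _ (Finset.sum_nonneg fun p _ => sq_nonneg _)
            rw [← hcard]
            refine Finset.sum_le_sum fun p _ => ?_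
            have h0 := hf0 0 p.1 (Fin.cons z0 p.2)
            have h1 := hf1 0 p.1 (Fin.cons z0 p.2)
            nlinarith
    -- Step 3: expand B^2
    set S2 : Fin N × Fin N → ℝ := fun tt =>
      ∑ x₀, ∑ z : Fin m → Fin N,
        (∏ i : Fin m, f i.succ x₀ (Fin.cons tt.1 z) * f i.succ x₀ (Fin.cons tt.2 z)) *
          (g (Fin.cons tt.1 z) * g (Fin.cons tt.2 z)) *
          (F x₀ (Fin.cons tt.1 z) * F x₀ (Fin.cons tt.2 z)) with hS2
    have hBsq : (∑ x₀, ∑ z : Fin m → Fin N, B x₀ z ^ 2) = ∑ tt : Fin N × Fin N, S2 tt := by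
      have hpt : ∀ x₀ (z : Fin m → Fin N), B x₀ z ^ 2 = ∑ tt : Fin N × Fin N,
          (∏ i : Fin m, f i.succ x₀ (Fin.cons tt.1 z) * f i.succ x₀ (Fin.cons tt.2 z)) *
            (g (Fin.cons tt.1 z) * g (Fin.cons tt.2 z)) *
            (F x₀ (Fin.cons tt.1 z) * F x₀ (Fin.cons tt.2 z)) := by
        intro x₀ z
        rw [sq, hB, Finset.sum_mul_sum, Fintype.sum_prod_type]
        refine Finset.sum_congr rfl fun t _ => Finset.sum_congr rfl fun t' _ => ?_
        rw [Finset.prod_mul_distrib]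
        ring
      calc (∑ x₀, ∑ z : Fin m → Fin N, B x₀ z ^ 2)
          = ∑ x₀, ∑ z : Fin m → Fin N, ∑ tt : Fin N × Fin N,
              (∏ i : Fin m, f i.succ x₀ (Fin.cons tt.1 z) * f i.succ x₀ (Fin.cons tt.2 z)) *
                (g (Fin.cons tt.1 z) * g (Fin.cons tt.2 z)) *
                (F x₀ (Fin.cons tt.1 z) * F x₀ (Fin.cons tt.2 z)) :=
            Finset.sum_congr rfl fun x₀ _ => Finset.sum_congr rfl fun z _ => hpt x₀ z
        _ = ∑ x₀, ∑ tt : Fin N × Fin N, ∑ z : Fin m → Fin N,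
              (∏ i : Fin m, f i.succ x₀ (Fin.cons tt.1 z) * f i.succ x₀ (Fin.cons tt.2 z)) *
                (g (Fin.cons tt.1 z) * g (Fin.cons tt.2 z)) *
                (F x₀ (Fin.cons tt.1 z) * F x₀ (Fin.cons tt.2 z)) :=
            Finset.sum_congr rfl fun x₀ _ => Finset.sum_comm
        _ = ∑ tt : Fin N × Fin N, S2 tt := Finset.sum_comm
    -- Step 4: apply IH to each pair tt
    have hIH : ∀ tt : Fin N × Fin N,
        |S2 tt| ^ 2 ^ m * (N:ℝ) ^ (2 * m + 1) ≤ (N:ℝ) ^ ((m + 1) * 2 ^ m) *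
          ∑ z : Fin m → Fin N, ∑ z' : Fin m → Fin N,
            |∑ x₀, ∏ ε : Fin m → Bool,
              F x₀ (Fin.cons tt.1 fun i => if ε i then z' i else z i) *
                F x₀ (Fin.cons tt.2 fun i => if ε i then z' i else z i)| := by
      intro tt
      exact ih (fun x₀ z => F x₀ (Fin.cons tt.1 z) * F x₀ (Fin.cons tt.2 z))
        (fun i x₀ z => f i.succ x₀ (Fin.cons tt.1 z) * f i.succ x₀ (Fin.cons tt.2 z))
        (fun z => g (Fin.cons tt.1 z) * g (Fin.cons tt.2 z))
        (fun i x₀ z => mul_nonneg (hf0 _ _ _) (hf0 _ _ _))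
        (fun i x₀ z => mul_le_one₀ (hf1 _ _ _) (hf0 _ _ _) (hf1 _ _ _))
        (fun i x₀ z c => by simp only [Fin.cons_update, hind])
        (fun z => by
          rw [abs_mul]
          exact mul_le_one₀ (hg _) (abs_nonneg _) (hg _))
    -- Step 5: reindex the RHS
    have hpt2 : ∀ (x₀ : Fin N) (t t' : Fin N) (z z' : Fin m → Fin N),
        (∏ ε : Fin (m+1) → Bool,
          F x₀ fun i => if ε i then (Fin.cons t' z' : Fin (m+1) → Fin N) i else (Fin.cons t z : Fin (m+1) → Fin N) i)
        = ∏ ε : Fin m → Bool,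
            F x₀ (Fin.cons t fun i => if ε i then z' i else z i) *
              F x₀ (Fin.cons t' fun i => if ε i then z' i else z i) := by
      intro x₀ t t' z z'
      set G : (Fin (m+1) → Bool) → ℝ := fun ε =>
        F x₀ fun i => if ε i then (Fin.cons t' z' : Fin (m+1) → Fin N) i
          else (Fin.cons t z : Fin (m+1) → Fin N) i with hG
      have harg : ∀ (b : Bool) (ε : Fin m → Bool),
          G (Fin.cons b ε)
          = F x₀ (Fin.cons (if b then t' else t) (fun i => if ε i then z' i else z i)) := by
        intro b ε
        show F x₀ (fun i : Fin (m+1) => if (Fin.cons b ε : Fin (m+1) → Bool) i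
            then (Fin.cons t' z' : Fin (m+1) → Fin N) i
            else (Fin.cons t z : Fin (m+1) → Fin N) i) = _
        congr 1
        funext i
        refine Fin.cases ?_ ?_ i
        · cases b <;> simp
        · intro j
          cases hj : ε j <;> simp [hj]
      calc ∏ ε : Fin (m+1) → Bool, G ε
          = ∏ p : Bool × (Fin m → Bool), G ((Fin.consEquiv fun _ => Bool) p) :=
            (Equiv.prod_comp (Fin.consEquiv fun _ => Bool) G).symm
        _ = ∏ b : Bool, ∏ ε : Fin m → Bool, G ((Fin.consEquiv fun _ => Bool) (b, ε)) :=
            Fintype.prod_prod_type _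
        _ = (∏ ε : Fin m → Bool, G (Fin.cons true ε)) *
              ∏ ε : Fin m → Bool, G (Fin.cons false ε) :=
            Fintype.prod_bool _
        _ = ∏ ε : Fin m → Bool, G (Fin.cons true ε) * G (Fin.cons false ε) :=
            Finset.prod_mul_distrib.symm
        _ = ∏ ε : Fin m → Bool,
              F x₀ (Fin.cons t fun i => if ε i then z' i else z i) *
                F x₀ (Fin.cons t' fun i => if ε i then z' i else z i) := by
            refine Finset.prod_congr rfl fun ε _ => ?_
            rw [harg, harg]
            simp only [if_true, if_false]
            exact mul_comm _ _
    have hR : (∑ tt : Fin N × Fin N, ∑ z : Fin m → Fin N, ∑ z' : Fin m → Fin N,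
          |∑ x₀, ∏ ε : Fin m → Bool,
            F x₀ (Fin.cons tt.1 fun i => if ε i then z' i else z i) *
              F x₀ (Fin.cons tt.2 fun i => if ε i then z' i else z i)|)
        = ∑ y : Fin (m+1) → Fin N, ∑ y' : Fin (m+1) → Fin N,
            |∑ x₀, ∏ ε : Fin (m+1) → Bool, F x₀ fun i => if ε i then y' i else y i| := by
      have step1 : ∀ (y : Fin (m+1) → Fin N),
          (∑ y' : Fin (m+1) → Fin N,
            |∑ x₀, ∏ ε : Fin (m+1) → Bool, F x₀ fun i => if ε i then y' i else y i|)
          = ∑ t' : Fin N, ∑ z' : Fin m → Fin N,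
              |∑ x₀, ∏ ε : Fin (m+1) → Bool,
                F x₀ fun i => if ε i then (Fin.cons t' z' : Fin (m+1) → Fin N) i else y i| := by
        intro y
        rw [← Equiv.sum_comp (Fin.consEquiv fun _ => Fin N)
          (fun y' : Fin (m+1) → Fin N =>
            |∑ x₀, ∏ ε : Fin (m+1) → Bool, F x₀ fun i => if ε i then y' i else y i|)]
        exact Fintype.sum_prod_type _
      calc (∑ tt : Fin N × Fin N, ∑ z : Fin m → Fin N, ∑ z' : Fin m → Fin N,
            |∑ x₀, ∏ ε : Fin m → Bool,
              F x₀ (Fin.cons tt.1 fun i => if ε i then z' i else z i) *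
                F x₀ (Fin.cons tt.2 fun i => if ε i then z' i else z i)|)
          = ∑ t : Fin N, ∑ t' : Fin N, ∑ z : Fin m → Fin N, ∑ z' : Fin m → Fin N,
              |∑ x₀, ∏ ε : Fin m → Bool,
                F x₀ (Fin.cons t fun i => if ε i then z' i else z i) *
                  F x₀ (Fin.cons t' fun i => if ε i then z' i else z i)| :=
            Fintype.sum_prod_type _
        _ = ∑ t : Fin N, ∑ z : Fin m → Fin N, ∑ t' : Fin N, ∑ z' : Fin m → Fin N,
              |∑ x₀, ∏ ε : Fin m → Bool,
                F x₀ (Fin.cons t fun i => if ε i then z' i else z i) *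
                  F x₀ (Fin.cons t' fun i => if ε i then z' i else z i)| :=
            Finset.sum_congr rfl fun t _ => Finset.sum_comm
        _ = ∑ y : Fin (m+1) → Fin N, ∑ y' : Fin (m+1) → Fin N,
              |∑ x₀, ∏ ε : Fin (m+1) → Bool, F x₀ fun i => if ε i then y' i else y i| := by
            symm
            rw [← Equiv.sum_comp (Fin.consEquiv fun _ => Fin N)
              (fun y : Fin (m+1) → Fin N => ∑ y' : Fin (m+1) → Fin N,
                |∑ x₀, ∏ ε : Fin (m+1) → Bool, F x₀ fun i => if ε i then y' i else y i|)]
            rw [Fintype.sum_prod_type]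
            refine Finset.sum_congr rfl fun t _ => ?_
            refine Finset.sum_congr rfl fun z _ => ?_
            simp only [Fin.consEquiv_apply]
            rw [step1 (Fin.cons t z)]
            refine Finset.sum_congr rfl fun t' _ => Finset.sum_congr rfl fun z' _ => ?_
            exact congrArg abs (Finset.sum_congr rfl fun x₀ _ => hpt2 x₀ t t' z z')
    -- Step 6: assemble
    set R := ∑ y : Fin (m+1) → Fin N, ∑ y' : Fin (m+1) → Fin N,
        |∑ x₀, ∏ ε : Fin (m+1) → Bool, F x₀ fun i => if ε i then y' i else y i| with hRdef
    set T := ∑ tt : Fin N × Fin N, S2 tt with hT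
    have hNR : (0:ℝ) < (N:ℝ) := by exact_mod_cast hN
    have h1 : (∑ x₀, ∑ y, (∏ i, f i x₀ y) * g y * F x₀ y) ^ 2 ≤ (N:ℝ) ^ (m + 1) * T := by
      rw [hS, ← hBsq]; exact hCS
    have hT0 : (0:ℝ) ≤ T := by
      have h2 : (N:ℝ) ^ (m+1) * 0 ≤ (N:ℝ) ^ (m+1) * T := by
        rw [mul_zero]
        exact (sq_nonneg _).trans h1
      exact le_of_mul_le_mul_left h2 (by positivity)
    have hQ : T ^ 2 ^ m * (N:ℝ) ^ 2 ≤ (N:ℝ) ^ (2 ^ (m+1)) * ∑ tt : Fin N × Fin N, |S2 tt| ^ 2 ^ m := by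
      obtain ⟨n, hn⟩ : ∃ n, 2 ^ m = n + 1 :=
        ⟨2 ^ m - 1, (Nat.succ_pred_eq_of_pos (Nat.pow_pos (n := m) two_pos)).symm⟩
      have h1 : T ^ 2 ^ m ≤ (∑ tt : Fin N × Fin N, |S2 tt|) ^ 2 ^ m :=
        pow_le_pow_left₀ hT0 (Finset.sum_le_sum fun tt _ => le_abs_self _) _
      have h2 : (∑ tt : Fin N × Fin N, |S2 tt|) ^ (n + 1)
          ≤ ((N:ℝ) ^ 2) ^ n * ∑ tt : Fin N × Fin N, |S2 tt| ^ (n + 1) := by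
        have h3 := pow_sum_le_card_mul_sum_pow
          (s := (Finset.univ : Finset (Fin N × Fin N)))
          (f := fun tt => |S2 tt|) (fun tt _ => abs_nonneg _) n
        have h4 : ((Finset.univ : Finset (Fin N × Fin N)).card : ℝ) = (N:ℝ) ^ 2 := by
          rw [Finset.card_univ]
          norm_num [Fintype.card_prod]
          ring
        rw [h4] at h3
        exact h3
      calc T ^ 2 ^ m * (N:ℝ) ^ 2
          ≤ (∑ tt : Fin N × Fin N, |S2 tt|) ^ 2 ^ m * (N:ℝ) ^ 2 :=
            mul_le_mul_of_nonneg_right h1 (by positivity)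
        _ = (∑ tt : Fin N × Fin N, |S2 tt|) ^ (n + 1) * (N:ℝ) ^ 2 := by rw [hn]
        _ ≤ ((N:ℝ) ^ 2) ^ n * (∑ tt : Fin N × Fin N, |S2 tt| ^ (n + 1)) * (N:ℝ) ^ 2 :=
            mul_le_mul_of_nonneg_right h2 (by positivity)
        _ = ((N:ℝ) ^ 2) ^ (n + 1) * ∑ tt : Fin N × Fin N, |S2 tt| ^ (n + 1) := by ring
        _ = (N:ℝ) ^ (2 ^ (m+1)) * ∑ tt : Fin N × Fin N, |S2 tt| ^ 2 ^ m := by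
            rw [← hn, ← pow_mul]
            congr 2
            ring
    -- final computation
    have habs : |∑ x₀, ∑ y, (∏ i, f i x₀ y) * g y * F x₀ y| ^ 2 ^ (m+1)
        = ((∑ x₀, ∑ y, (∏ i, f i x₀ y) * g y * F x₀ y) ^ 2) ^ 2 ^ m := by
      have e : 2 ^ (m+1) = 2 * 2 ^ m := by ring
      rw [e, pow_mul, sq_abs]
    have hsum6 : (∑ tt : Fin N × Fin N, |S2 tt| ^ 2 ^ m) * (N:ℝ) ^ (2*m+1)
        ≤ (N:ℝ) ^ ((m+1) * 2 ^ m) * R := by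
      rw [← hR, Finset.sum_mul, Finset.mul_sum]
      exact Finset.sum_le_sum fun tt _ => hIH tt
    calc |∑ x₀, ∑ y, (∏ i, f i x₀ y) * g y * F x₀ y| ^ 2 ^ (m+1) * (N:ℝ) ^ (2*(m+1)+1)
        = ((∑ x₀, ∑ y, (∏ i, f i x₀ y) * g y * F x₀ y) ^ 2) ^ 2 ^ m *
            ((N:ℝ) ^ 2 * (N:ℝ) ^ (2*m+1)) := by
          rw [habs, ← pow_add]
          congr 2
          ring
      _ ≤ ((N:ℝ) ^ (m+1) * T) ^ 2 ^ m * ((N:ℝ) ^ 2 * (N:ℝ) ^ (2*m+1)) := by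
          apply mul_le_mul_of_nonneg_right (pow_le_pow_left₀ (sq_nonneg _) h1 _)
          positivity
      _ = (N:ℝ) ^ ((m+1) * 2^m) * ((T ^ 2^m * (N:ℝ)^2) * (N:ℝ)^(2*m+1)) := by
          rw [mul_pow, ← pow_mul]
          ring
      _ ≤ (N:ℝ) ^ ((m+1) * 2^m) *
            (((N:ℝ) ^ (2 ^ (m+1)) * ∑ tt : Fin N × Fin N, |S2 tt| ^ 2 ^ m) * (N:ℝ)^(2*m+1)) := by
          apply mul_le_mul_of_nonneg_left _ (by positivity)
          apply mul_le_mul_of_nonneg_right hQ (by positivity)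
      _ = (N:ℝ) ^ ((m+1) * 2^m) * ((N:ℝ) ^ (2 ^ (m+1)) *
            ((∑ tt : Fin N × Fin N, |S2 tt| ^ 2^m) * (N:ℝ)^(2*m+1))) := by ring
      _ ≤ (N:ℝ) ^ ((m+1) * 2^m) * ((N:ℝ) ^ (2 ^ (m+1)) *
            ((N:ℝ) ^ ((m+1) * 2 ^ m) * R)) := by
          apply mul_le_mul_of_nonneg_left _ (by positivity)
          apply mul_le_mul_of_nonneg_left hsum6 (by positivity)
      _ = (N:ℝ) ^ ((m + 1 + 1) * 2 ^ (m+1)) * R := by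
          rw [show (m + 1 + 1) * 2 ^ (m+1) = (m+1) * 2^m + (2^(m+1) + (m+1) * 2^m) by ring,
            pow_add, pow_add]
          ring

lemma count_bound (m N : ℕ) (hm : 1 ≤ m) (hN : 0 < N)
    (H : (Fin (m + 1) → Fin N) → ℝ) (hsign : ∀ v, H v = 1 ∨ H v = -1)
    (hHad : ∀ y y' : Fin m → Fin N, (∀ i, y i ≠ y' i) →
      ∑ x₀ : Fin N, ∏ ε : Fin m → Bool,
        H (Fin.cons x₀ (fun i => if ε i then y' i else y i)) = 0) :
    ∑ y : Fin m → Fin N, ∑ y' : Fin m → Fin N,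
      |∑ x₀ : Fin N, ∏ ε : Fin m → Bool,
        H (Fin.cons x₀ fun i => if ε i then y' i else y i)|
      ≤ (m : ℝ) * (N:ℝ) ^ (2 * m) := by
  classical
  have habs : ∀ v, |H v| = 1 := by intro v; rcases hsign v with h | h <;> simp [h]
  have hpair : ∀ y y' : Fin m → Fin N,
      |∑ x₀ : Fin N, ∏ ε : Fin m → Bool, H (Fin.cons x₀ fun i => if ε i then y' i else y i)|
      ≤ ∑ i : Fin m, if y i = y' i then (N:ℝ) else 0 := by
    intro y y'
    by_cases hd : ∀ i, y i ≠ y' i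
    · rw [hHad y y' hd, abs_zero]
      exact Finset.sum_nonneg fun i _ => by positivity
    · push_neg at hd
      obtain ⟨i0, hi0⟩ := hd
      have hb : |∑ x₀ : Fin N, ∏ ε : Fin m → Bool,
          H (Fin.cons x₀ fun i => if ε i then y' i else y i)| ≤ (N:ℝ) := by
        calc |∑ x₀ : Fin N, ∏ ε : Fin m → Bool,
              H (Fin.cons x₀ fun i => if ε i then y' i else y i)|
            ≤ ∑ x₀ : Fin N, |∏ ε : Fin m → Bool,
                H (Fin.cons x₀ fun i => if ε i then y' i else y i)| :=
              Finset.abs_sum_le_sum_abs _ _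
          _ = ∑ _x₀ : Fin N, (1:ℝ) := by
              refine Finset.sum_congr rfl fun x₀ _ => ?_
              rw [Finset.abs_prod]
              exact Finset.prod_eq_one fun ε _ => habs _
          _ = (N:ℝ) := by simp
      refine hb.trans ?_
      calc (N:ℝ) = (if y i0 = y' i0 then (N:ℝ) else 0) := by rw [if_pos hi0]
        _ ≤ ∑ i : Fin m, if y i = y' i then (N:ℝ) else 0 :=
          Finset.single_le_sum (f := fun i => if y i = y' i then (N:ℝ) else 0)
            (fun i _ => by positivity) (Finset.mem_univ i0)
  have hfiber : ∀ (i : Fin m) (c : Fin N),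
      (∑ y' : Fin m → Fin N, if c = y' i then (N:ℝ) else 0) = (N:ℝ) ^ m := by
    intro i c
    have e := Equiv.funSplitAt i (Fin N)
    have h1 : ∀ p : Fin N × ({ j : Fin m // j ≠ i } → Fin N),
        (Equiv.funSplitAt i (Fin N)).symm p i = p.1 := by
      intro p
      simp [Equiv.funSplitAt, Equiv.piSplitAt]
    calc (∑ y' : Fin m → Fin N, if c = y' i then (N:ℝ) else 0)
        = ∑ p : Fin N × ({ j : Fin m // j ≠ i } → Fin N),
            if c = (Equiv.funSplitAt i (Fin N)).symm p i then (N:ℝ) else 0 :=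
          (Equiv.sum_comp (Equiv.funSplitAt i (Fin N)).symm
            (fun y' => if c = y' i then (N:ℝ) else 0)).symm
      _ = ∑ p : Fin N × ({ j : Fin m // j ≠ i } → Fin N), if c = p.1 then (N:ℝ) else 0 := by
          refine Finset.sum_congr rfl fun p _ => ?_
          rw [h1 p]
      _ = ∑ a : Fin N, ∑ _r : { j : Fin m // j ≠ i } → Fin N, if c = a then (N:ℝ) else 0 :=
          Fintype.sum_prod_type _
      _ = ∑ a : Fin N, (N:ℝ) ^ (m - 1) * if c = a then (N:ℝ) else 0 := by
          refine Finset.sum_congr rfl fun a _ => ?_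
          rw [Finset.sum_const, Finset.card_univ]
          simp [Fintype.card_fun, Fintype.card_subtype_compl]
      _ = (N:ℝ) ^ (m - 1) * (N:ℝ) := by
          rw [← Finset.mul_sum]
          congr 1
          simp
      _ = (N:ℝ) ^ m := by
          rw [← pow_succ]
          congr 1
          omega
  calc ∑ y : Fin m → Fin N, ∑ y' : Fin m → Fin N,
        |∑ x₀ : Fin N, ∏ ε : Fin m → Bool,
          H (Fin.cons x₀ fun i => if ε i then y' i else y i)|
      ≤ ∑ y : Fin m → Fin N, ∑ y' : Fin m → Fin N,
          ∑ i : Fin m, if y i = y' i then (N:ℝ) else 0 :=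
        Finset.sum_le_sum fun y _ => Finset.sum_le_sum fun y' _ => hpair y y'
    _ = ∑ y : Fin m → Fin N, ∑ i : Fin m,
          ∑ y' : Fin m → Fin N, if y i = y' i then (N:ℝ) else 0 :=
        Finset.sum_congr rfl fun y _ => Finset.sum_comm
    _ = ∑ y : Fin m → Fin N, ∑ _i : Fin m, (N:ℝ) ^ m :=
        Finset.sum_congr rfl fun y _ => Finset.sum_congr rfl fun i _ => hfiber i (y i)
    _ = (m:ℝ) * (N:ℝ) ^ (2*m) := by
        simp [Finset.sum_const, Finset.card_univ, Fintype.card_fun]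
        push_cast
        ring

/-- Let `H` be a Hadamard `k`-tensor of side length `N` (here `k = m+1` with `m ≥ 1`): a
sign tensor whose contraction product along the first dimension vanishes whenever all pairs
of indices differ. Then `μ^∞(H) ≥ (N/(k−1))^{1/2^{k−1}}`. -/
theorem stmt11 (m N : ℕ) (hm : 1 ≤ m) (hN : 0 < N)
    (H : (Fin (m + 1) → Fin N) → ℝ) (hsign : ∀ v, H v = 1 ∨ H v = -1)
    (hHad : ∀ y y' : Fin m → Fin N, (∀ i, y i ≠ y' i) →
      ∑ x₀ : Fin N, ∏ ε : Fin m → Bool,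
        H (Fin.cons x₀ (fun i => if ε i then y' i else y i)) = 0) :
    ((N : ℝ) / m) ^ ((1 : ℝ) / 2 ^ m) ≤ muInf H := by
  classical
  set c : ℝ := ((N : ℝ) / m) ^ ((1 : ℝ) / 2 ^ m) with hc
  have hNR : (0:ℝ) < (N:ℝ) := by exact_mod_cast hN
  have hmR : (0:ℝ) < (m:ℝ) := by exact_mod_cast hm
  have hcpos : 0 < c := Real.rpow_pos_of_pos (by positivity) _
  have habs1 : ∀ v, |H v| = 1 := by intro v; rcases hsign v with h | h <;> simp [h]
  have hcard : ∑ _x : Fin (m+1) → Fin N, (1:ℝ) = (N:ℝ) ^ (m+1) := by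
    rw [Finset.sum_const, Finset.card_univ]
    simp [Fintype.card_fun]
  -- c ^ 2^m = N / m
  have hcpow : c ^ (2 ^ m : ℕ) = (N:ℝ) / m := by
    rw [hc, ← Real.rpow_natCast (((N : ℝ) / m) ^ ((1 : ℝ) / 2 ^ m)) (2 ^ m),
      ← Real.rpow_mul (by positivity)]
    rw [show (1 : ℝ) / 2 ^ m * ((2 ^ m : ℕ) : ℝ) = 1 by
      push_cast
      field_simp]
    exact Real.rpow_one _
  have hind01 : ∀ (s : Set (Fin (m+1) → Fin N)) (w : Fin (m+1) → Fin N),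
      0 ≤ s.indicator (1 : (Fin (m+1) → Fin N) → ℝ) w ∧
        s.indicator (1 : (Fin (m+1) → Fin N) → ℝ) w ≤ 1 := by
    intro s w
    rw [Set.indicator_apply]
    split <;> norm_num
  -- the indicator bridge: μ* elements are bounded
  have hmustar_el : ∀ Z : Set ((j : Fin (m+1)) → Fin N), IsCylinderIntersection Z →
      |∑ x, H x * Z.indicator 1 x| * c ≤ (N:ℝ) ^ (m + 1) := by
    intro Z hZ
    obtain ⟨C, hCyl, rfl⟩ := hZ
    set z0 : Fin N := ⟨0, hN⟩ with hz0
    set F : Fin N → (Fin m → Fin N) → ℝ := fun x₀ y => H (Fin.cons x₀ y) with hF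
    set f : Fin m → Fin N → (Fin m → Fin N) → ℝ := fun i x₀ y =>
      (C i.succ).indicator (1 : (Fin (m+1) → Fin N) → ℝ) (Fin.cons x₀ y) with hf
    set g : (Fin m → Fin N) → ℝ := fun y =>
      (C 0).indicator (1 : (Fin (m+1) → Fin N) → ℝ) (Fin.cons z0 y) with hg
    -- bridge equality
    have hbridge : ∑ x, H x * Set.indicator (⋂ i, C i) 1 x
        = ∑ x₀, ∑ y, (∏ i, f i x₀ y) * g y * F x₀ y := by
      calc ∑ x, H x * Set.indicator (⋂ i, C i) 1 x
          = ∑ p : Fin N × (Fin m → Fin N),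
              H (Fin.cons p.1 p.2) * Set.indicator (⋂ i, C i) 1 (Fin.cons p.1 p.2) := by
            rw [← Equiv.sum_comp (Fin.consEquiv fun _ => Fin N)
              (fun x => H x * Set.indicator (⋂ i, C i) 1 x)]
            rfl
        _ = ∑ x₀, ∑ y, H (Fin.cons x₀ y) * Set.indicator (⋂ i, C i) 1 (Fin.cons x₀ y) :=
            Fintype.sum_prod_type _
        _ = ∑ x₀, ∑ y, (∏ i, f i x₀ y) * g y * F x₀ y := by
            refine Finset.sum_congr rfl fun x₀ _ => Finset.sum_congr rfl fun y _ => ?_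
            rw [indicator_iInter_eq_prod, Fin.prod_univ_succ]
            have hg0 : (C 0).indicator (1 : (Fin (m+1) → Fin N) → ℝ) (Fin.cons x₀ y) = g y := by
              rw [hg]
              refine indicator_cyl_eq (hCyl 0) ?_
              intro j hj
              refine Fin.cases (fun h => absurd rfl h) (fun k _ => ?_) j hj
              rw [Fin.cons_succ, Fin.cons_succ]
            rw [hg0, hF, hf]
            ring
    have hkey := key_ineq N hN m F f g
      (fun i x₀ y => (hind01 _ _).1)
      (fun i x₀ y => (hind01 _ _).2)
      (fun i x₀ y cc => by
        rw [hf]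
        simp only
        rw [Fin.cons_update]
        exact indicator_cyl_eq (hCyl i.succ) fun j hj => Function.update_of_ne hj _ _)
      (fun y => by
        rw [abs_of_nonneg (hind01 _ _).1]
        exact (hind01 _ _).2)
    simp only [hF] at hkey
    rw [hbridge]
    set a : ℝ := |∑ x₀, ∑ y, (∏ i, f i x₀ y) * g y * F x₀ y| with ha
    have hRm := count_bound m N hm hN H hsign hHad
    have h1 : a ^ 2 ^ m * (N:ℝ) ^ (2*m+1)
        ≤ (N:ℝ) ^ ((m+1) * 2^m) * ((m:ℝ) * (N:ℝ) ^ (2*m)) := by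
      refine le_trans ?_ (mul_le_mul_of_nonneg_left hRm (by positivity))
      rw [ha, hF]
      simp only
      exact hkey
    have h2 : a ^ 2 ^ m * (N:ℝ) ≤ (N:ℝ) ^ ((m+1) * 2^m) * m := by
      apply le_of_mul_le_mul_right _ (pow_pos hNR (2*m))
      calc a ^ 2 ^ m * (N:ℝ) * (N:ℝ) ^ (2*m) = a ^ 2 ^ m * (N:ℝ) ^ (2*m+1) := by
            rw [pow_succ]
            ring
        _ ≤ (N:ℝ) ^ ((m+1) * 2^m) * ((m:ℝ) * (N:ℝ) ^ (2*m)) := h1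
        _ = (N:ℝ) ^ ((m+1) * 2^m) * m * (N:ℝ) ^ (2*m) := by ring
    have h3 : (a * c) ^ 2 ^ m ≤ ((N:ℝ) ^ (m+1)) ^ 2 ^ m := by
      rw [mul_pow, hcpow, ← pow_mul]
      rw [show a ^ 2 ^ m * ((N:ℝ) / m) = a ^ 2 ^ m * (N:ℝ) / m by ring, div_le_iff₀ hmR]
      exact h2
    exact le_of_pow_le_pow_left₀ (Nat.pow_pos (n := m) two_pos).ne' (by positivity) h3
  -- bounds on mustar
  have hbdd : BddAbove {r : ℝ | ∃ Z : Set ((j : Fin (m+1)) → Fin N), IsCylinderIntersection Z ∧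
      r = |∑ x, H x * Z.indicator 1 x|} := by
    refine ⟨(N:ℝ) ^ (m+1), ?_⟩
    rintro r ⟨Z, hZ, rfl⟩
    calc |∑ x, H x * Z.indicator 1 x| ≤ ∑ x, |H x * Z.indicator 1 x| :=
          Finset.abs_sum_le_sum_abs _ _
      _ ≤ ∑ _x : Fin (m+1) → Fin N, (1:ℝ) := by
          refine Finset.sum_le_sum fun x _ => ?_
          rw [abs_mul, habs1, one_mul, abs_of_nonneg (hind01 Z x).1]
          exact (hind01 Z x).2
      _ = (N:ℝ) ^ (m+1) := hcard
  set z1 : Fin (m+1) → Fin N := fun _ => ⟨0, hN⟩ with hz1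
  have hsing : (1:ℝ) = |∑ x, H x * Set.indicator {z1} 1 x| := by
    have hs : ∑ x, H x * Set.indicator {z1} (1 : (Fin (m+1) → Fin N) → ℝ) x = H z1 := by
      simp [Set.indicator_apply, Set.mem_singleton_iff, mul_ite, mul_one, mul_zero,
        Finset.sum_ite_eq']
    rw [hs, habs1]
  have hM1 : (1:ℝ) ≤ mustar H :=
    le_csSup hbdd ⟨{z1}, singleton_isCylInt hm z1, hsing⟩
  have hMpos : (0:ℝ) < mustar H := lt_of_lt_of_le one_pos hM1
  have hcM : c * mustar H ≤ (N:ℝ) ^ (m+1) := by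
    have hMle : mustar H ≤ (N:ℝ) ^ (m+1) / c := by
      refine csSup_le ⟨1, {z1}, singleton_isCylInt hm z1, hsing⟩ ?_
      rintro r ⟨Z, hZ, rfl⟩
      rw [le_div_iff₀ hcpos]
      exact hmustar_el Z hZ
    calc c * mustar H ≤ c * ((N:ℝ) ^ (m+1) / c) :=
          mul_le_mul_of_nonneg_left hMle hcpos.le
      _ = (N:ℝ) ^ (m+1) := by field_simp
  -- conclude
  refine le_csInf ⟨mu H, H, fun x => ?_, rfl⟩ ?_
  · rcases hsign x with h | h <;> rw [h] <;> norm_num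
  rintro s ⟨B, hB, rfl⟩
  refine le_csInf ?_ ?_
  · -- representation of B exists
    set e := (Fintype.equivFin (Fin (m+1) → Fin N)).symm with he
    refine ⟨∑ t, |B (e t)|, Fintype.card (Fin (m+1) → Fin N), fun t => B (e t),
      fun t => {e t}, fun t => singleton_isCylInt hm (e t), fun x => ?_, rfl⟩
    symm
    calc ∑ t, B (e t) * Set.indicator {e t} 1 x
        = ∑ z : Fin (m+1) → Fin N, B z * Set.indicator {z} 1 x :=
          Equiv.sum_comp e (fun z => B z * Set.indicator {z} (1 : (Fin (m+1) → Fin N) → ℝ) x)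
      _ = B x := by
          simp [Set.indicator_apply, Set.mem_singleton_iff, mul_ite, mul_one, mul_zero,
            Finset.sum_ite_eq]
  rintro r ⟨n, α, Z, hZcyl, hBrep, rfl⟩
  have hchain : (N:ℝ) ^ (m+1) ≤ (∑ t, |α t|) * mustar H := by
    calc (N:ℝ) ^ (m+1) = ∑ _x : Fin (m+1) → Fin N, (1:ℝ) := hcard.symm
      _ ≤ ∑ x, H x * B x := Finset.sum_le_sum fun x _ => hB x
      _ = ∑ x, ∑ t, H x * (α t * (Z t).indicator 1 x) := by
          refine Finset.sum_congr rfl fun x _ => ?_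
          rw [hBrep x, Finset.mul_sum]
      _ = ∑ t, ∑ x, H x * (α t * (Z t).indicator 1 x) := Finset.sum_comm
      _ = ∑ t, α t * ∑ x, H x * (Z t).indicator 1 x := by
          refine Finset.sum_congr rfl fun t _ => ?_
          rw [Finset.mul_sum]
          exact Finset.sum_congr rfl fun x _ => by ring
      _ ≤ ∑ t, |α t * ∑ x, H x * (Z t).indicator 1 x| :=
          Finset.sum_le_sum fun t _ => le_abs_self _
      _ = ∑ t, |α t| * |∑ x, H x * (Z t).indicator 1 x| := by
          simp [abs_mul]
      _ ≤ ∑ t, |α t| * mustar H :=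
          Finset.sum_le_sum fun t _ => mul_le_mul_of_nonneg_left
            (le_csSup hbdd ⟨Z t, hZcyl t, rfl⟩) (abs_nonneg _)
      _ = (∑ t, |α t|) * mustar H := (Finset.sum_mul _ _ _).symm
  exact le_of_mul_le_mul_right (hcM.trans hchain) hMpos
end

section
/- Let f : {-1,1}^n → {-1,1} and let d be a natural number. If there is no polynomial g of degree at most d with 1 ≤ f(x)g(x) ≤ α for all x (for a given α > 1), then there exists v : {-1,1}^n → ℝ such that: (1) ⟨v, χ_T⟩ = 0 for all |T| ≤ d, (2) ‖v‖₁ = 1, and (3) ⟨v, f⟩ ≥ (α−1)/(α+1). -/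
open scoped BigOperators

/-- The Fourier character `χ_T(x) = ∏_{i ∈ T} x_i` on the Boolean cube, with `true ↦ 1`
and `false ↦ -1`. -/
def chiT {n : ℕ} (T : Finset (Fin n)) (x : Fin n → Bool) : ℝ :=
  ∏ i ∈ T, (if x i then 1 else -1)

/-- If there is no polynomial `g` of degree at most `d` with `1 ≤ f(x)g(x) ≤ α` for all `x`
(for a given `α > 1`), then there is a dual polynomial `v` with: (1) `⟨v, χ_T⟩ = 0` for all
`|T| ≤ d`, (2) `‖v‖₁ = 1`, and (3) `⟨v, f⟩ ≥ (α−1)/(α+1)`. -/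
theorem stmt12 (n d : ℕ) (f : (Fin n → Bool) → ℝ) (hf : ∀ x, f x = 1 ∨ f x = -1)
    (α : ℝ) (hα : 1 < α)
    (h : ¬ ∃ c : Finset (Fin n) → ℝ, (∀ T, d < T.card → c T = 0) ∧
      ∀ x, 1 ≤ f x * (∑ T : Finset (Fin n), c T * chiT T x) ∧
        f x * (∑ T : Finset (Fin n), c T * chiT T x) ≤ α) :
    ∃ v : (Fin n → Bool) → ℝ,
      (∀ T : Finset (Fin n), T.card ≤ d → ∑ x, v x * chiT T x = 0) ∧
      (∑ x, |v x|) = 1 ∧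
      (α - 1) / (α + 1) ≤ ∑ x, v x * f x := by
  classical
  -- the linear map from coefficients to `f · (polynomial)`
  let L : (Finset (Fin n) → ℝ) →ₗ[ℝ] ((Fin n → Bool) → ℝ) :=
    { toFun := fun c => fun x => f x * ∑ T : Finset (Fin n), c T * chiT T x
      map_add' := by
        intro c c'; funext x
        simp [add_mul, Finset.sum_add_distrib, mul_add]
      map_smul' := by
        intro r c; funext x
        simp only [Pi.smul_apply, smul_eq_mul, RingHom.id_apply, mul_assoc, ← Finset.mul_sum]
        ring }
  -- coefficients supported on low-degree sets
  let V : Submodule ℝ (Finset (Fin n) → ℝ) :=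
    Submodule.pi {T | d < T.card} (fun _ => ⊥)
  let K : Submodule ℝ ((Fin n → Bool) → ℝ) := V.map L
  let C : Set ((Fin n → Bool) → ℝ) := Set.univ.pi fun _ => Set.Icc 1 α
  have hCcompact : IsCompact C := isCompact_univ_pi fun _ => isCompact_Icc
  have hCconvex : Convex ℝ C := convex_pi fun _ _ => convex_Icc _ _
  have hKclosed : IsClosed (K : Set ((Fin n → Bool) → ℝ)) :=
    Submodule.closed_of_finiteDimensional K
  have hdisj : Disjoint C (K : Set ((Fin n → Bool) → ℝ)) := by
    rw [Set.disjoint_left]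
    rintro g hg ⟨c, hc, rfl⟩
    refine h ⟨c, fun T hT => ?_, fun x => ?_⟩
    · have := hc T hT
      simpa using this
    · have h1 := hg x (Set.mem_univ x)
      exact ⟨h1.1, h1.2⟩
  obtain ⟨φ, u, v₀, hCu, huv, hKv⟩ :=
    geometric_hahn_banach_compact_closed hCconvex hCcompact K.convex hKclosed hdisj
  -- φ vanishes on the subspace K
  have hφK : ∀ g ∈ K, φ g = 0 := by
    intro g hg
    by_contra hne
    have hmem : ((v₀ - 1) / φ g) • g ∈ K := K.smul_mem _ hg
    have := hKv _ hmem
    rw [map_smul, smul_eq_mul, div_mul_cancel₀ _ hne] at this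
    linarith
  have hv0 : v₀ < 0 := by
    have := hKv 0 K.zero_mem
    rwa [map_zero] at this
  have hCneg : ∀ g ∈ C, φ g < 0 := fun g hg => lt_trans (lt_trans (hCu g hg) huv) hv0
  -- the dual vector
  set w : (Fin n → Bool) → ℝ := fun x => -φ (Pi.single x 1) with hw
  have heval : ∀ g : (Fin n → Bool) → ℝ, ∑ x, g x * w x = -φ g := by
    intro g
    have h1 : (∑ x, g x • (Pi.single x (1 : ℝ) : (Fin n → Bool) → ℝ)) = g := by
      rw [Finset.sum_congr rfl fun x _ => by
        rw [← Pi.single_smul, smul_eq_mul, mul_one]]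
      exact Finset.univ_sum_single g
    have h2 : φ g = ∑ x, g x * φ (Pi.single x 1) := by
      conv_lhs => rw [← h1]
      rw [map_sum]
      simp [smul_eq_mul]
    rw [h2, ← Finset.sum_neg_distrib]
    exact Finset.sum_congr rfl fun x _ => by rw [hw]; ring
  -- f·χ_T ∈ K for low-degree T
  have hfchi : ∀ T : Finset (Fin n), T.card ≤ d →
      (fun x => f x * chiT T x) ∈ K := by
    intro T hT
    refine ⟨Pi.single T 1, ?_, ?_⟩
    · intro T' hT'
      have : T' ≠ T := by
        intro hEq; subst hEq; exact absurd hT (not_le.mpr hT')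
      simp [Pi.single_apply, this]
    · funext x
      simp only [L, LinearMap.coe_mk, AddHom.coe_mk]
      congr 1
      rw [Fintype.sum_eq_single T (fun T' hT' => by simp [Pi.single_apply, hT'])]
      simp
  -- positivity from separation, using the minimizing point of C
  set u₀ : (Fin n → Bool) → ℝ := fun x => if 0 ≤ w x then 1 else α with hu₀
  have hu₀C : u₀ ∈ C := by
    intro x _
    by_cases hx : 0 ≤ w x <;> simp [hu₀, hx, le_of_lt hα, Set.mem_Icc]
  have hApos : 0 < ∑ x, u₀ x * w x := by
    rw [heval u₀]
    have := hCneg u₀ hu₀C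
    linarith
  set S : ℝ := ∑ x, |w x| with hS
  have hSnn : 0 ≤ S := Finset.sum_nonneg fun x _ => abs_nonneg _
  have hkey : (α + 1) * (∑ x, w x) - (α - 1) * S = 2 * ∑ x, u₀ x * w x := by
    rw [hS, Finset.mul_sum, Finset.mul_sum, ← Finset.sum_sub_distrib, Finset.mul_sum]
    refine Finset.sum_congr rfl fun x _ => ?_
    by_cases hx : 0 ≤ w x
    · rw [abs_of_nonneg hx]; simp [hu₀, hx]; ring
    · rw [abs_of_neg (not_le.mp hx)]; simp [hu₀, hx]; ring
  have hSpos : 0 < S := by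
    rcases lt_or_eq_of_le hSnn with h' | h'
    · exact h'
    · exfalso
      have hww : ∀ x, w x = 0 := by
        intro x
        have h0 : ∀ x ∈ Finset.univ, |w x| = 0 := by
          rw [← Finset.sum_eq_zero_iff_of_nonneg (fun x _ => abs_nonneg (w x))]
          exact h'.symm
        exact abs_eq_zero.mp (h0 x (Finset.mem_univ x))
      have : (∑ x, u₀ x * w x) = 0 := Finset.sum_eq_zero fun x _ => by rw [hww, mul_zero]
      linarith
  refine ⟨fun x => f x * w x / S, ?_, ?_, ?_⟩
  · -- orthogonality
    intro T hT
    have h1 : (∑ x, f x * w x / S * chiT T x) = (∑ x, (f x * chiT T x) * w x) / S := by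
      rw [Finset.sum_div]
      exact Finset.sum_congr rfl fun x _ => by ring
    rw [h1, heval, hφK _ (hfchi T hT), neg_zero, zero_div]
  · -- L1 norm is 1
    have h1 : (∑ x, |f x * w x / S|) = (∑ x, |w x|) / S := by
      rw [Finset.sum_div]
      refine Finset.sum_congr rfl fun x _ => ?_
      rw [abs_div, abs_of_pos hSpos, abs_mul]
      rcases hf x with h' | h' <;> rw [h'] <;> simp
    rw [h1, ← hS, div_self (ne_of_gt hSpos)]
  · -- correlation bound
    have h1 : (∑ x, f x * w x / S * f x) = (∑ x, w x) / S := by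
      rw [Finset.sum_div]
      refine Finset.sum_congr rfl fun x _ => ?_
      rcases hf x with h' | h' <;> rw [h'] <;> ring
    rw [h1, div_le_div_iff₀ (by linarith) hSpos]
    nlinarith [hApos, hkey]
end

section
/- Let f : {-1,1}^n → {-1,1}. If there is no polynomial g of degree at most d with f(x)g(x) ≥ 1 for all x, then there exists v : {-1,1}^n → ℝ with ⟨v, χ_T⟩ = 0 for all |T| ≤ d, ‖v‖₁ = 1, and v(x)f(x) ≥ 0 for all x. -/
open scoped BigOperators
open scoped RealInnerProductSpace

/-- The linear map sending a coefficient vector `c` to `x ↦ f x * ∑_{|T| ≤ d} c T χ_T x`. -/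
noncomputable def Lmap (n d : ℕ) (f : (Fin n → Bool) → ℝ) :
    (Finset (Fin n) → ℝ) →ₗ[ℝ] EuclideanSpace ℝ (Fin n → Bool) where
  toFun c := WithLp.toLp 2 (fun x => f x * ∑ T : Finset (Fin n), (if T.card ≤ d then c T else 0) * chiT T x)
  map_add' a b := by
    ext x
    show f x * _ = f x * _ + f x * _
    rw [← mul_add, ← Finset.sum_add_distrib]
    congr 1
    refine Finset.sum_congr rfl fun T _ => ?_
    by_cases hT : T.card ≤ d <;> simp [hT, add_mul]
  map_smul' r a := by
    ext x
    show f x * (∑ T : Finset (Fin n), (if T.card ≤ d then (r • a) T else 0) * chiT T x)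
        = r * (f x * ∑ T : Finset (Fin n), (if T.card ≤ d then a T else 0) * chiT T x)
    have : (∑ T : Finset (Fin n), (if T.card ≤ d then (r • a) T else 0) * chiT T x)
        = r * ∑ T : Finset (Fin n), (if T.card ≤ d then a T else 0) * chiT T x := by
      rw [Finset.mul_sum]
      refine Finset.sum_congr rfl fun T _ => ?_
      by_cases hT : T.card ≤ d <;> simp [hT, mul_assoc]
    rw [this]; ring

/-- Euclidean space on the Boolean cube. -/
abbrev Esp (n : ℕ) := EuclideanSpace ℝ (Fin n → Bool)

/-- If there is no polynomial `g` of degree at most `d` with `f(x)g(x) ≥ 1` for all `x`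
(i.e. `f` has threshold degree greater than `d`), then there is a dual witness `v` with
`⟨v, χ_T⟩ = 0` for all `|T| ≤ d`, `‖v‖₁ = 1`, and `v(x)f(x) ≥ 0` for all `x`. -/
theorem stmt13 (n d : ℕ) (f : (Fin n → Bool) → ℝ) (hf : ∀ x, f x = 1 ∨ f x = -1)
    (h : ¬ ∃ c : Finset (Fin n) → ℝ, (∀ T, d < T.card → c T = 0) ∧
      ∀ x, 1 ≤ f x * (∑ T : Finset (Fin n), c T * chiT T x)) :
    ∃ v : (Fin n → Bool) → ℝ,
      (∀ T : Finset (Fin n), T.card ≤ d → ∑ x, v x * chiT T x = 0) ∧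
      (∑ x, |v x|) = 1 ∧
      (∀ x, 0 ≤ v x * f x) := by
  classical
  have hsq : ∀ x, f x * f x = 1 := fun x => by rcases hf x with h1 | h1 <;> rw [h1] <;> norm_num
  have habs : ∀ x, |f x| = 1 := fun x => by rcases hf x with h1 | h1 <;> rw [h1] <;> norm_num
  let L := Lmap n d f
  let K : Submodule ℝ (Esp n) := LinearMap.range L
  -- the simplex, as a subset of E
  let Δ : Set (Esp n) := WithLp.ofLp ⁻¹' stdSimplex ℝ (Fin n → Bool)
  have hΔcpt : IsCompact Δ := by
    have himg : (EuclideanSpace.equiv (Fin n → Bool) ℝ).symm '' stdSimplex ℝ (Fin n → Bool)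
        = Δ := by
      apply Set.Subset.antisymm
      · rintro w ⟨w', hw', rfl⟩; exact hw'
      · intro w hw; exact ⟨w, hw, rfl⟩
    rw [← himg]
    exact (isCompact_stdSimplex ℝ (Fin n → Bool)).image (EuclideanSpace.equiv (Fin n → Bool) ℝ).symm.continuous
  have hΔconv : Convex ℝ Δ := fun x hx y hy a b ha hb hab => convex_stdSimplex ℝ _ hx hy ha hb hab
  have hΔne : Δ.Nonempty := ⟨WithLp.toLp 2 (Pi.single default 1), single_mem_stdSimplex ℝ (default : Fin n → Bool)⟩
  -- image of the simplex under the orthogonal projection onto K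
  let P : Esp n →ₗ[ℝ] Esp n := K.subtype ∘ₗ K.orthogonalProjectionOnto.toLinearMap
  let C : Set (Esp n) := P '' Δ
  have hCcpt : IsCompact C :=
    hΔcpt.image (continuous_subtype_val.comp K.orthogonalProjectionOnto.continuous)
  have hCconv : Convex ℝ C := hΔconv.linear_image P
  have hCne : C.Nonempty := hΔne.image _
  have hCsubK : ∀ w ∈ C, w ∈ K := by
    rintro w ⟨δ, _, rfl⟩; exact (K.orthogonalProjectionOnto δ).2
  by_cases h0 : (0 : Esp n) ∈ C
  · -- there is δ in the simplex orthogonal to K: the dual witness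
    obtain ⟨δ, hδΔ, hδ0⟩ := h0
    have hδK : δ ∈ Kᗮ := by
      rw [← Submodule.orthogonalProjectionOnto_eq_zero_iff (K := K)]
      ext1
      exact hδ0
    have hδnn : ∀ x, 0 ≤ δ x := hδΔ.1
    have hδsum : ∑ x, δ x = 1 := hδΔ.2
    refine ⟨fun x => δ x * f x, ?_, ?_, ?_⟩
    · intro T hT
      -- f·χ_T ∈ K
      have hmem : (WithLp.toLp 2 (fun x => f x * chiT T x) : Esp n) ∈ K := by
        refine ⟨fun T' => if T' = T then 1 else 0, ?_⟩
        ext x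
        show f x * _ = f x * chiT T x
        congr 1
        rw [Finset.sum_eq_single T]
        · simp [hT]
        · intro T' _ hne
          by_cases hT' : T'.card ≤ d <;> simp [hT', hne]
        · simp
      have horth := (Submodule.mem_orthogonal _ _).1 hδK _ hmem
      have hinner : @inner ℝ (Esp n) _ (WithLp.toLp 2 (fun x => f x * chiT T x)) δ
          = ∑ y, (f y * chiT T y) * δ y := by
        simp [PiLp.inner_apply, RCLike.inner_apply]
        exact Finset.sum_congr rfl fun _ _ => by ring
      rw [hinner] at horth
      rw [← horth]
      exact Finset.sum_congr rfl fun x _ => by ring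
    · calc (∑ x, |δ x * f x|) = ∑ x, δ x := by
            refine Finset.sum_congr rfl fun x _ => ?_
            rw [abs_mul, habs x, mul_one, abs_of_nonneg (hδnn x)]
      _ = 1 := hδsum
    · intro x
      have hd : δ x * f x * f x = δ x := by rw [mul_assoc, hsq, mul_one]
      rw [hd]; exact hδnn x
  · -- otherwise: find u ∈ C with u x ≥ ‖u‖² > 0 for all x, contradicting h
    exfalso
    obtain ⟨u, huC, humin⟩ :=
      exists_norm_eq_iInf_of_complete_convex hCne (hCcpt.isClosed.isComplete) hCconv (0 : Esp n)
    have hvar : ∀ w ∈ C, ⟪(0 : Esp n) - u, w - u⟫ ≤ 0 :=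
      (norm_eq_iInf_iff_real_inner_le_zero hCconv huC).1 humin
    have hne : u ≠ 0 := fun hu => h0 (hu ▸ huC)
    have hpos : (0 : ℝ) < ⟪u, u⟫ :=
      lt_of_le_of_ne real_inner_self_nonneg
        (fun h' => hne (inner_self_eq_zero.1 h'.symm))
    have key : ∀ w ∈ C, ⟪u, u⟫ ≤ ⟪u, w⟫ := by
      intro w hw
      have h1 := hvar w hw
      rw [zero_sub, inner_sub_right, inner_neg_left, inner_neg_left, neg_sub_neg, sub_nonpos] at h1
      exact h1
    -- u is in K, and every coordinate of u is at least ‖u‖²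
    have huK : u ∈ K := hCsubK u huC
    have hcoord : ∀ x, ⟪u, u⟫ ≤ u x := by
      intro x
      have hsingle : (WithLp.toLp 2 (Pi.single x (1:ℝ)) : Esp n) ∈ Δ := single_mem_stdSimplex ℝ x
      have hPx : P (WithLp.toLp 2 (Pi.single x 1)) ∈ C := Set.mem_image_of_mem _ hsingle
      have h1 := key _ hPx
      have h2 : ⟪u, P (WithLp.toLp 2 (Pi.single x 1))⟫ = u x := by
        have h3 : ⟪u, P (WithLp.toLp 2 (Pi.single x 1))⟫ = ⟪(P u : Esp n), (WithLp.toLp 2 (Pi.single x (1:ℝ)) : Esp n)⟫ := by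
          show ⟪u, ((K.orthogonalProjectionOnto (WithLp.toLp 2 (Pi.single x 1)) : K) : Esp n)⟫
              = ⟪((K.orthogonalProjectionOnto u : K) : Esp n), (WithLp.toLp 2 (Pi.single x (1:ℝ)) : Esp n)⟫
          exact (Submodule.inner_starProjection_left_eq_right K u _).symm
        rw [h3]
        have hPu : (P u : Esp n) = u := by
          show ((K.orthogonalProjectionOnto u : K) : Esp n) = u
          exact Submodule.starProjection_eq_self_iff.2 huK
        rw [hPu]
        simp [PiLp.inner_apply, RCLike.inner_apply, Pi.single_apply]
      rw [h2] at h1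
      exact h1
    obtain ⟨c, hc⟩ := huK
    set m := ⟪u, u⟫ with hm
    apply h
    refine ⟨fun T => (if T.card ≤ d then c T else 0) / m, fun T hT => by simp [Nat.not_le.2 hT], ?_⟩
    intro x
    have hux : L c x = u x := by rw [hc]
    have hdiv : (∑ T : Finset (Fin n), (if T.card ≤ d then c T else 0) / m * chiT T x)
        = (∑ T : Finset (Fin n), (if T.card ≤ d then c T else 0) * chiT T x) / m := by
      rw [Finset.sum_div]
      exact Finset.sum_congr rfl fun T _ => by ring
    rw [hdiv]
    have hLcx : f x * ((∑ T : Finset (Fin n), (if T.card ≤ d then c T else 0) * chiT T x) / m)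
        = u x / m := by
      rw [mul_div_assoc']
      exact congrArg (· / m) hux
    rw [hLcx, le_div_iff₀ hpos, one_mul]
    exact hcoord x
end

section
/- The (k, M, OR_m) pattern tensor is a subtensor of the k-party set-intersection tensor on n' = m·M^{k−1} bits: there is an injection mapping each index tuple (x, y₁,...,y_{k−1}) of the pattern tensor to inputs (x, z₁,...,z_{k−1}) ∈ ({-1,1}^{n'})^k such that OR_{n'}(x ∧ z₁ ∧ ... ∧ z_{k−1}) equals the pattern tensor entry OR_m applied blockwise. -/
open scoped BigOperators

/-- The `(k, M, OR_m)` pattern tensor is a subtensor of the `k`-party set-intersection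
tensor on `n' = m·M^{k−1}` bits (here `k1 = k−1`, bit strings of length `n'` are indexed by
a block `i ∈ [m]` and a position `t ∈ [M]^{k−1}`, and `true` plays the role of `−1`):
there is a map `y ↦ (z₁,…,z_{k−1})` such that `(x, y) ↦ (x, z₁,…,z_{k−1})` is injective and
`OR_{n'}(x ∧ z₁ ∧ … ∧ z_{k−1})` equals the pattern tensor entry `OR_m` applied blockwise,
i.e. `OR_m(x^1[y₁[1],…,y_{k−1}[1]], …, x^m[y₁[m],…,y_{k−1}[m]])`. -/
theorem stmt19 (k1 m M : ℕ) (hM : 0 < M) :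
    ∃ Z : (Fin k1 → Fin m → Fin M) → Fin k1 → (Fin m → (Fin k1 → Fin M) → Bool),
      Function.Injective
        (fun p : (Fin m → (Fin k1 → Fin M) → Bool) × (Fin k1 → Fin m → Fin M) =>
          (p.1, Z p.2)) ∧
      ∀ (x : Fin m → (Fin k1 → Fin M) → Bool) (y : Fin k1 → Fin m → Fin M),
        ((∃ (i : Fin m) (t : Fin k1 → Fin M), x i t = true ∧ ∀ j, Z y j i t = true) ↔
          ∃ i : Fin m, x i (fun j => y j i) = true) := by
  refine ⟨fun y j i t => decide (t j = y j i), ?_, ?_⟩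
  · intro p q h
    obtain ⟨h1, h2⟩ := Prod.mk.injEq .. ▸ h
    refine Prod.ext h1 ?_
    funext j i
    have := congrFun (congrFun (congrFun h2 j) i) (fun _ => p.2 j i)
    simpa using this.symm
  · intro x y
    constructor
    · rintro ⟨i, t, hx, ht⟩
      refine ⟨i, ?_⟩
      have : (fun j => y j i) = t := by
        funext j; have := ht j; simp at this; exact this.symm
      rwa [this]
    · rintro ⟨i, hx⟩
      exact ⟨i, fun j => y j i, hx, fun j => by simp⟩
end
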